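/- arXiv:2505.15496 — 5 statements merged into one kernel-verified Lean document; each statement's English description precedes it below -/
import Mathlib

section
/- Unboundedness of the multi-task kl moment generating function in the unbalanced setting: Let n ≥ 1 and m_1,…,m_n ≥ 1 be integers and m_min = min_i m_i. For μ ∈ (0,1), let X_{i,j}, i = 1,…,n, j = 1,…,m_i, be i.i.d. Bernoulli(μ) random variables and set μ̂ = (1/n) Σ_{i=1}^n (1/m_i) Σ_{j=1}^{m_i} X_{i,j} and M_μ(λ) = E[ exp( n λ kl(μ̂ | μ) ) ] ∈ [0,∞]. Then for every λ > m_min, sup_{0 < μ < 1} M_μ(λ) = +∞; in particular, there is no finite bound on M_μ(λ) depending only on n and m_1,…,m_n whenever λ > m_min. -/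
open MeasureTheory ProbabilityTheory
open scoped ENNReal NNReal Classical

noncomputable section

/-- Binary Kullback-Leibler divergence `kl(q|p)` with values in `[0,∞]`
(with the conventions `0 log 0 = 0` and `kl(q|p) = ∞` when `p ∈ {0,1}` and `q ≠ p`). -/
def klBin (q p : ℝ) : ℝ≥0∞ :=
  if (p = 0 ∧ q ≠ 0) ∨ (p = 1 ∧ q ≠ 1) then ⊤
  else ENNReal.ofReal (q * Real.log (q / p) + (1 - q) * Real.log ((1 - q) / (1 - p)))

/-- Real-valued binary KL divergence (finite and equal to `klBin` whenever `0 < p < 1`). -/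
def klReal (q p : ℝ) : ℝ :=
  q * Real.log (q / p) + (1 - q) * Real.log ((1 - q) / (1 - p))

/-- Kullback-Leibler divergence between two measures, with values in `[0,∞]`
(`∞` when absolute continuity fails or `log (dμ/dν)` is not `μ`-integrable). -/
def KLdiv {α : Type*} [MeasurableSpace α] (μ ν : Measure α) : ℝ≥0∞ :=
  if μ ≪ ν ∧ Integrable (fun x => Real.log ((μ.rnDeriv ν x).toReal)) μ then
    ENNReal.ofReal (∫ x, Real.log ((μ.rnDeriv ν x).toReal) ∂μ)
  else ⊤

/-- The prior process `𝔓`: sample a prior `P` from the hyper-prior, then `f₁,…,fₙ`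
i.i.d. from `P`. -/
def priorProc {F : Type*} [MeasurableSpace F] (Pri : Measure (Measure F)) (n : ℕ) :
    Measure (Measure F × (Fin n → F)) :=
  Pri.bind fun P => (Measure.dirac P).prod (Measure.pi fun _ : Fin n => P)

/-- `exp` extended to `[0,∞]`. -/
def expENN (x : ℝ≥0∞) : ℝ≥0∞ := if x = ⊤ then ⊤ else ENNReal.ofReal (Real.exp x.toReal)

/-- Bernoulli measure on `Bool` with mean `μ`. -/
def bernB (μ : ℝ) : Measure Bool :=
  ENNReal.ofReal μ • Measure.dirac true + ENNReal.ofReal (1 - μ) • Measure.dirac false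

/-- Bernoulli measure on `ℝ` with mean `μ`. -/
def bernR (μ : ℝ) : Measure ℝ :=
  ENNReal.ofReal μ • Measure.dirac 1 + ENNReal.ofReal (1 - μ) • Measure.dirac 0

/-- `Φ_a(p) = -(1/a) log(1 - p + p e^{-a})`. -/
def Phi (a p : ℝ) : ℝ := -(1 / a) * Real.log (1 - p + p * Real.exp (-a))

/-- The binomial distribution `B(t, p)`, as a measure on `ℝ`. -/
def binomR (t : ℕ) (p : ℝ) : Measure ℝ :=
  ∑ k ∈ Finset.range (t + 1),
    ENNReal.ofReal ((t.choose k) * p ^ k * (1 - p) ^ (t - k)) • Measure.dirac (k : ℝ)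

/-- The distribution of one task `(D, S)` with `S ∼ D^{⊗m}`, when `(D, m) ∼ τDm`. -/
def taskMeasure {Z : Type*} [MeasurableSpace Z] (τDm : Measure (Measure Z × ℕ)) :
    Measure (Measure Z × (Σ k : ℕ, Fin k → Z)) :=
  τDm.bind fun p =>
    (Measure.dirac p.1).prod (Measure.map (Sigma.mk p.2) (Measure.pi fun _ : Fin p.2 => p.1))

/-- Numeric inverse of the vector-valued kl bound:
`kl⁻¹_{m₁,…,mₙ}(q₁,…,qₙ | b) = sup {(1/n) ∑ pᵢ : pᵢ ∈ [0,1], ∑ mᵢ kl(qᵢ|pᵢ) ≤ b}`. -/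
def klInvVec {n : ℕ} (m : Fin n → ℕ) (q : Fin n → ℝ) (b : ℝ≥0∞) : ℝ :=
  sSup ((fun p : Fin n → ℝ => (n : ℝ)⁻¹ * ∑ i, p i) ''
    {p | (∀ i, p i ∈ Set.Icc (0 : ℝ) 1) ∧ (∑ i, (m i : ℝ≥0∞) * klBin (q i) (p i)) ≤ b})

/-- Numeric inverse of the scalar kl bound:
`kl⁻¹_m(q | b) = sup {p ∈ [0,1] : m · kl(q|p) ≤ b}`. -/
def klInv1 (m : ℝ) (q : ℝ) (b : ℝ≥0∞) : ℝ :=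
  sSup {p : ℝ | p ∈ Set.Icc (0 : ℝ) 1 ∧ ENNReal.ofReal m * klBin q p ≤ b}

/-- Numeric inverse of the vector-valued Catoni-style bound:
`Φ⁻¹_{m₁,…,mₙ}(q₁,…,qₙ | b, λ) = sup {(1/n) ∑ pᵢ : pᵢ ∈ [0,1],
  -∑ mᵢ log(1 - pᵢ + pᵢ e^{-λᵢ/(n mᵢ)}) ≤ (1/n) ∑ λᵢ qᵢ + b}`. -/
def PhiInvVec {n : ℕ} (m : Fin n → ℕ) (q : Fin n → ℝ) (b : ℝ≥0∞) (lam : Fin n → ℝ) : ℝ :=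
  sSup ((fun p : Fin n → ℝ => (n : ℝ)⁻¹ * ∑ i, p i) ''
    {p | (∀ i, p i ∈ Set.Icc (0 : ℝ) 1) ∧
      ENNReal.ofReal
        ((-(∑ i, (m i : ℝ) * Real.log (1 - p i + p i * Real.exp (-(lam i) / (n * m i))))) -
          (n : ℝ)⁻¹ * ∑ i, lam i * q i) ≤ b})

/-- Numeric inverse of the scalar Catoni-style bound:
`Φ⁻¹_m(q | b, λ) = sup {p ∈ [0,1] : -m log(1 - p + p e^{-λ/m}) ≤ λ q + b}`. -/
def PhiInv1 (m : ℝ) (q : ℝ) (b : ℝ≥0∞) (lam : ℝ) : ℝ :=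
  sSup {p : ℝ | p ∈ Set.Icc (0 : ℝ) 1 ∧
    ENNReal.ofReal ((-(m * Real.log (1 - p + p * Real.exp (-lam / m)))) - lam * q) ≤ b}

open Filter

instance bernB_finite (μ : ℝ) : IsFiniteMeasure (bernB μ) := by
  constructor
  simp [bernB]

lemma bernB_singleton (μ : ℝ) (b : Bool) :
    bernB μ {b} = if b then ENNReal.ofReal μ else ENNReal.ofReal (1 - μ) := by
  cases b <;> simp [bernB, Measure.dirac_apply]

lemma pi_singleton {ι : Type*} [Fintype ι] {α : ι → Type*} [∀ i, MeasurableSpace (α i)]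
    (μs : ∀ i, Measure (α i)) [∀ i, SigmaFinite (μs i)] (a : ∀ i, α i) :
    Measure.pi μs {a} = ∏ i, μs i {a i} := by
  rw [show ({a} : Set (∀ i, α i)) = Set.univ.pi (fun i => {a i}) by
    ext f; simp [Set.mem_pi, funext_iff]]
  exact Measure.pi_pi μs _

set_option maxHeartbeats 1000000 in
theorem stmt1 {n : ℕ} (hn : 1 ≤ n) (m : Fin n → ℕ) (hm : ∀ i, 1 ≤ m i)
    (lam : ℝ) (hlam : (⨅ i, (m i : ℝ)) < lam) :
    (⨆ μ ∈ Set.Ioo (0 : ℝ) 1,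
        ∫⁻ ω, ENNReal.ofReal (Real.exp ((n : ℝ) * lam *
            klReal ((n : ℝ)⁻¹ * ∑ i, (m i : ℝ)⁻¹ * ∑ j, (if ω i j then (1 : ℝ) else 0)) μ))
          ∂(Measure.pi fun i => Measure.pi fun _ : Fin (m i) => bernB μ)) = ⊤ := by
  classical
  haveI : NeZero n := ⟨by omega⟩
  obtain ⟨i₀, hi₀⟩ := exists_eq_ciInf_of_finite (f := fun i : Fin n => (m i : ℝ))
  have hn0 : (n : ℝ) ≠ 0 := Nat.cast_ne_zero.2 (by omega)
  have hm₀lam : (m i₀ : ℝ) < lam := by rw [hi₀]; exact hlam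
  set q : ℝ := ((n : ℝ) - 1) / n with hq
  have h1q : 1 - q = (n : ℝ)⁻¹ := by rw [hq, one_sub_div hn0, sub_sub_cancel, one_div]
  have hq0 : 0 ≤ q := by
    apply div_nonneg _ (by positivity)
    have : (1 : ℝ) ≤ n := by exact_mod_cast hn
    linarith
  set M' : ℕ := ∑ i ∈ Finset.univ.erase i₀, m i with hM'
  set E : ℝ → ℝ := fun μ => (n : ℝ) * lam * klReal q μ + (m i₀ : ℝ) * Real.log (1 - μ)
      + (M' : ℝ) * Real.log μ with hE
  set ω₀ : (i : Fin n) → Fin (m i) → Bool := fun i _ => decide (i ≠ i₀) with hω₀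
  -- Step 1: pointwise lower bound by the single atom ω₀
  have key : ∀ μ ∈ Set.Ioo (0 : ℝ) 1,
      ENNReal.ofReal (Real.exp (E μ)) ≤
        ∫⁻ ω, ENNReal.ofReal (Real.exp ((n : ℝ) * lam *
            klReal ((n : ℝ)⁻¹ * ∑ i, (m i : ℝ)⁻¹ * ∑ j, (if ω i j then (1 : ℝ) else 0)) μ))
          ∂(Measure.pi fun i => Measure.pi fun _ : Fin (m i) => bernB μ) := by
    intro μ hμ
    obtain ⟨hμ0, hμ1⟩ := hμ
    set P := Measure.pi fun i => Measure.pi fun _ : Fin (m i) => bernB μ with hP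
    -- empirical mean at ω₀
    have hqhat : (n : ℝ)⁻¹ * ∑ i, (m i : ℝ)⁻¹ * ∑ j, (if ω₀ i j then (1 : ℝ) else 0) = q := by
      have h1 : ∀ i : Fin n,
          (m i : ℝ)⁻¹ * ∑ j : Fin (m i), (if ω₀ i j then (1 : ℝ) else 0)
            = if i = i₀ then 0 else 1 := by
        intro i
        have hmne : (m i : ℝ) ≠ 0 := Nat.cast_ne_zero.2 (by have := hm i; omega)
        by_cases h : i = i₀
        · simp [hω₀, h]
        · simp [hω₀, h, Finset.sum_const, inv_mul_cancel₀ hmne]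
      rw [Finset.sum_congr rfl (fun i _ => h1 i)]
      have : (∑ i : Fin n, if i = i₀ then (0 : ℝ) else 1) = (n : ℝ) - 1 := by
        have : (∑ i : Fin n, if i = i₀ then (0 : ℝ) else 1)
            = ∑ i : Fin n, (1 - if i = i₀ then (1 : ℝ) else 0) := by
          apply Finset.sum_congr rfl; intro i _; by_cases h : i = i₀ <;> simp [h]
        rw [this, Finset.sum_sub_distrib, Finset.sum_ite_eq' Finset.univ i₀]
        simp
      rw [this, hq, div_eq_inv_mul]
    -- measure of the atom
    have hPω₀ : P {ω₀} = ENNReal.ofReal ((1 - μ) ^ (m i₀) * μ ^ M') := by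
      rw [hP, pi_singleton]
      have h2 : ∀ i : Fin n, (Measure.pi fun _ : Fin (m i) => bernB μ) {ω₀ i}
          = (if i = i₀ then ENNReal.ofReal (1 - μ) else ENNReal.ofReal μ) ^ (m i) := by
        intro i
        rw [pi_singleton]
        have : ∀ j : Fin (m i), bernB μ {ω₀ i j}
            = if i = i₀ then ENNReal.ofReal (1 - μ) else ENNReal.ofReal μ := by
          intro j
          rw [bernB_singleton]
          by_cases h : i = i₀ <;> simp [hω₀, h]
        rw [Finset.prod_congr rfl (fun j _ => this j), Finset.prod_const, Finset.card_univ,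
          Fintype.card_fin]
      rw [Finset.prod_congr rfl (fun i _ => h2 i)]
      rw [← Finset.mul_prod_erase Finset.univ _ (Finset.mem_univ i₀)]
      have h3 : (∏ i ∈ Finset.univ.erase i₀,
          (if i = i₀ then ENNReal.ofReal (1 - μ) else ENNReal.ofReal μ) ^ (m i))
          = ENNReal.ofReal μ ^ M' := by
        rw [Finset.prod_congr rfl (fun i hi => by
          rw [if_neg (Finset.ne_of_mem_erase hi)]), Finset.prod_pow_eq_pow_sum]
      rw [if_pos rfl, h3, ← ENNReal.ofReal_pow (by linarith : (0:ℝ) ≤ 1 - μ), ← ENNReal.ofReal_pow hμ0.le,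
        ← ENNReal.ofReal_mul (pow_nonneg (by linarith) _)]
    -- the integrand value at ω₀ times the atom mass is exp (E μ)
    have hval : ENNReal.ofReal (Real.exp ((n : ℝ) * lam * klReal q μ)) * P {ω₀}
        = ENNReal.ofReal (Real.exp (E μ)) := by
      rw [hPω₀, ← ENNReal.ofReal_mul (Real.exp_nonneg _)]
      congr 1
      have e1 : Real.exp ((m i₀ : ℝ) * Real.log (1 - μ)) = (1 - μ) ^ (m i₀) := by
        rw [Real.exp_nat_mul, Real.exp_log (by linarith)]
      have e2 : Real.exp ((M' : ℝ) * Real.log μ) = μ ^ M' := by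
        rw [Real.exp_nat_mul, Real.exp_log hμ0]
      rw [hE]
      rw [Real.exp_add, Real.exp_add, e1, e2]; ring
    calc ENNReal.ofReal (Real.exp (E μ)) =
        ENNReal.ofReal (Real.exp ((n : ℝ) * lam *
          klReal ((n : ℝ)⁻¹ * ∑ i, (m i : ℝ)⁻¹ * ∑ j, (if ω₀ i j then (1 : ℝ) else 0)) μ))
          * P {ω₀} := by rw [hqhat, hval]
      _ = ∫⁻ ω in {ω₀}, ENNReal.ofReal (Real.exp ((n : ℝ) * lam *
            klReal ((n : ℝ)⁻¹ * ∑ i, (m i : ℝ)⁻¹ * ∑ j, (if ω i j then (1 : ℝ) else 0)) μ)) ∂P :=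
          by rw [lintegral_singleton]
      _ ≤ _ := setLIntegral_le_lintegral _ _
  -- Step 2: exp (E μ) tends to infinity as μ → 1 within (0,1)
  have htend : Tendsto (fun μ => Real.exp (E μ)) (nhdsWithin 1 (Set.Ioo (0 : ℝ) 1)) atTop := by
    set A : ℝ → ℝ := fun μ => (n : ℝ) * lam * (q * (Real.log q - Real.log μ))
        + lam * Real.log (n : ℝ)⁻¹ + (M' : ℝ) * Real.log μ with hA
    have hEeq : ∀ μ ∈ Set.Ioo (0 : ℝ) 1,
        E μ = A μ + ((m i₀ : ℝ) - lam) * Real.log (1 - μ) := by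
      intro μ hμ
      obtain ⟨hμ0, hμ1⟩ := hμ
      have hklr : klReal q μ = q * (Real.log q - Real.log μ)
          + (1 - q) * (Real.log (n : ℝ)⁻¹ - Real.log (1 - μ)) := by
        rw [klReal]
        congr 1
        · rcases eq_or_ne q 0 with h | h
          · simp [h]
          · rw [Real.log_div h (ne_of_gt hμ0)]
        · rw [h1q, Real.log_div (inv_ne_zero hn0) (by linarith)]
      simp only [hE, hA]
      rw [hklr, h1q]
      field_simp
      ring
    have hlog1 : Tendsto (fun μ : ℝ => Real.log μ) (nhdsWithin 1 (Set.Ioo (0 : ℝ) 1)) (nhds 0) := by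
      have := (Real.continuousAt_log (one_ne_zero)).tendsto
      rw [Real.log_one] at this
      exact this.mono_left nhdsWithin_le_nhds
    have hAt : Tendsto A (nhdsWithin 1 (Set.Ioo (0 : ℝ) 1))
        (nhds ((n : ℝ) * lam * (q * (Real.log q - 0)) + lam * Real.log (n : ℝ)⁻¹
          + (M' : ℝ) * 0)) := by
      exact (((tendsto_const_nhds.sub hlog1).const_mul q).const_mul ((n : ℝ) * lam)).add_const
        (lam * Real.log (n : ℝ)⁻¹) |>.add (hlog1.const_mul (M' : ℝ))
    have h1μ : Tendsto (fun μ : ℝ => 1 - μ) (nhdsWithin 1 (Set.Ioo (0 : ℝ) 1))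
        (nhdsWithin 0 (Set.Ioi (0 : ℝ))) := by
      apply tendsto_nhdsWithin_of_tendsto_nhds_of_eventually_within
      · exact ((continuous_const.sub continuous_id).tendsto' 1 0 (by norm_num)).mono_left
          nhdsWithin_le_nhds
      · exact Filter.eventually_of_mem self_mem_nhdsWithin (fun μ hμ => sub_pos.2 hμ.2)
    have hlogbot : Tendsto (fun μ : ℝ => Real.log (1 - μ))
        (nhdsWithin 1 (Set.Ioo (0 : ℝ) 1)) atBot :=
      Real.tendsto_log_nhdsGT_zero.comp h1μ
    have hmulTop : Tendsto (fun μ : ℝ => ((m i₀ : ℝ) - lam) * Real.log (1 - μ))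
        (nhdsWithin 1 (Set.Ioo (0 : ℝ) 1)) atTop :=
      Tendsto.const_mul_atBot_of_neg (by linarith) hlogbot
    have hEtop : Tendsto E (nhdsWithin 1 (Set.Ioo (0 : ℝ) 1)) atTop := by
      refine (hAt.add_atTop hmulTop).congr' ?_
      filter_upwards [self_mem_nhdsWithin] with μ hμ
      exact (hEeq μ hμ).symm
    exact Real.tendsto_exp_atTop.comp hEtop
  -- Step 3: conclude
  by_contra hne
  set S := (⨆ μ ∈ Set.Ioo (0 : ℝ) 1,
      ∫⁻ ω, ENNReal.ofReal (Real.exp ((n : ℝ) * lam *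
          klReal ((n : ℝ)⁻¹ * ∑ i, (m i : ℝ)⁻¹ * ∑ j, (if ω i j then (1 : ℝ) else 0)) μ))
        ∂(Measure.pi fun i => Measure.pi fun _ : Fin (m i) => bernB μ)) with hS
  haveI : (nhdsWithin (1 : ℝ) (Set.Ioo (0 : ℝ) 1)).NeBot :=
    right_nhdsWithin_Ioo_neBot (by norm_num)
  obtain ⟨μ, hge, hμmem⟩ :=
    ((htend.eventually_ge_atTop (S.toReal + 1)).and self_mem_nhdsWithin).exists
  have hle : ENNReal.ofReal (S.toReal + 1) ≤ S := by
    calc ENNReal.ofReal (S.toReal + 1) ≤ ENNReal.ofReal (Real.exp (E μ)) :=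
          ENNReal.ofReal_le_ofReal hge
      _ ≤ _ := key μ hμmem
      _ ≤ S := by
          rw [hS]
          exact le_biSup (fun μ : ℝ => ∫⁻ ω, ENNReal.ofReal (Real.exp ((n : ℝ) * lam *
            klReal ((n : ℝ)⁻¹ * ∑ i, (m i : ℝ)⁻¹ * ∑ j, (if ω i j then (1 : ℝ) else 0)) μ))
              ∂(Measure.pi fun i => Measure.pi fun _ : Fin (m i) => bernB μ)) hμmem
  have : S + 1 ≤ S := by
    rwa [ENNReal.ofReal_add ENNReal.toReal_nonneg zero_le_one, ENNReal.ofReal_toReal hne,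
      ENNReal.ofReal_one] at hle
  have hlt : S < S + 1 := ENNReal.lt_add_right hne one_ne_zero
  exact absurd this hlt.not_ge

end
end

section
/- Fast-rate Catoni-style bound for task-centric unbalanced multi-task learning: For any fixed hyper-prior 𝒫, any δ > 0 and any fixed λ_1,…,λ_n > 0, with probability at least 1 − δ over the sampling of the training datasets S_1,…,S_n it holds for all hyper-posteriors 𝔮 and all posteriors Q_1,…,Q_n that − Σ_{i=1}^n m_i · log( 1 − er_i(Q_i) + er_i(Q_i) · e^{−λ_i/(n m_i)} ) ≤ (1/n) Σ_{i=1}^n λ_i · ĥer_i(Q_i) + KL(𝔔‖𝔓) + log(1/δ). -/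
open MeasureTheory ProbabilityTheory
open scoped ENNReal NNReal Classical

noncomputable section

theorem my_lintegral_pi_prod {k : ℕ} {E : Fin k → Type*} [∀ i, MeasurableSpace (E i)]
    (μ : ∀ i, Measure (E i)) [∀ i, SigmaFinite (μ i)]
    (f : ∀ i, E i → ℝ≥0∞) (hf : ∀ i, Measurable (f i)) :
    ∫⁻ x, ∏ i, f i (x i) ∂Measure.pi μ = ∏ i, ∫⁻ x, f i x ∂μ i := by
  induction k with
  | zero =>
      rw [Measure.pi_of_empty]
      simp
  | succ k ih =>
      have A := (measurePreserving_piFinSuccAbove μ 0).symm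
      have hmeas : Measurable fun x : ∀ i, E i => ∏ i, f i (x i) :=
        Finset.measurable_prod _ fun i _ => (hf i).comp (measurable_pi_apply i)
      rw [← A.lintegral_comp hmeas]
      have key : ∀ a : E 0 × (∀ j : Fin k, E (Fin.succAbove 0 j)),
          (∏ i, f i (((MeasurableEquiv.piFinSuccAbove E 0).symm a) i)) =
          f 0 a.1 * ∏ j, f (Fin.succAbove 0 j) (a.2 j) := by
        intro a
        rw [Fin.prod_univ_succAbove (fun i => f i (((MeasurableEquiv.piFinSuccAbove E 0).symm a) i)) 0]
        simp only [MeasurableEquiv.piFinSuccAbove, Fin.insertNthEquiv,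
          MeasurableEquiv.symm_mk, MeasurableEquiv.coe_mk, Equiv.symm_symm,
          Equiv.coe_fn_mk, Fin.insertNth_apply_same]
        refine congrArg _ (Finset.prod_congr rfl fun x _ => ?_)
        exact congrArg _ (Fin.insertNth_apply_succAbove 0 a.1 a.2 x)
      simp_rw [key]
      have B := lintegral_prod_mul (μ := μ 0)
        (ν := Measure.pi fun j : Fin k => μ (Fin.succAbove 0 j))
        (f := fun x => f 0 x)
        (g := fun y : ∀ j : Fin k, E (Fin.succAbove 0 j) => ∏ j, f (Fin.succAbove 0 j) (y j))
        (hf 0).aemeasurable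
        (Finset.measurable_prod _ fun j _ =>
          (hf (Fin.succAbove 0 j)).comp (measurable_pi_apply j)).aemeasurable
      rw [B, ih _ _ fun j => hf (Fin.succAbove 0 j),
        Fin.prod_univ_succAbove (fun i => ∫⁻ x, f i x ∂μ i) 0]

theorem my_map_eval_pi {k : ℕ} {E : Fin k → Type*} [∀ i, MeasurableSpace (E i)]
    (μ : ∀ i, Measure (E i)) [∀ i, IsProbabilityMeasure (μ i)] (i : Fin k) :
    (Measure.pi μ).map (Function.eval i) = μ i := by
  ext s hs
  rw [Measure.map_apply (measurable_pi_apply i) hs, Set.eval_preimage, Measure.pi_pi]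
  rw [Finset.prod_eq_single i (fun j _ hj => by simp [Function.update_of_ne hj]) (by simp)]
  simp


theorem my_exp_convex_bound {l a : ℝ} (hl : l ∈ Set.Icc (0:ℝ) 1) :
    Real.exp (-(a * l)) ≤ 1 - l + l * Real.exp (-a) := by
  obtain ⟨h0, h1⟩ := hl
  have h := convexOn_exp.2 (Set.mem_univ (0:ℝ)) (Set.mem_univ (-a))
    (by linarith : (0:ℝ) ≤ 1 - l) h0 (by ring)
  simp only [smul_eq_mul, mul_zero, zero_add, Real.exp_zero, mul_one] at h
  calc Real.exp (-(a * l)) = Real.exp ((1-l) * 0 + l * (-a)) := by ring_nf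
    _ ≤ (1-l) * 1 + l * Real.exp (-a) := by simpa using h
    _ = 1 - l + l * Real.exp (-a) := by ring

theorem my_C_bounds {a y : ℝ} (ha : 0 ≤ a) (hy : y ∈ Set.Icc (0:ℝ) 1) :
    Real.exp (-a) ≤ 1 - y + y * Real.exp (-a) ∧ 1 - y + y * Real.exp (-a) ≤ 1 := by
  obtain ⟨h0, h1⟩ := hy
  have he1 : Real.exp (-a) ≤ 1 := Real.exp_le_one_iff.mpr (by linarith)
  have he0 : 0 < Real.exp (-a) := Real.exp_pos _
  constructor <;> nlinarith

theorem my_log_C_bounds {a y : ℝ} (ha : 0 ≤ a) (hy : y ∈ Set.Icc (0:ℝ) 1) :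
    (-a ≤ Real.log (1 - y + y * Real.exp (-a)) ∧
      Real.log (1 - y + y * Real.exp (-a)) ≤ 0) ∧
      0 < 1 - y + y * Real.exp (-a) := by
  obtain ⟨hlo, hhi⟩ := my_C_bounds ha hy
  have hpos : 0 < 1 - y + y * Real.exp (-a) := lt_of_lt_of_le (Real.exp_pos _) hlo
  refine ⟨⟨?_, Real.log_nonpos (le_of_lt hpos) hhi⟩, hpos⟩
  calc -a = Real.log (Real.exp (-a)) := (Real.log_exp _).symm
    _ ≤ _ := Real.log_le_log (Real.exp_pos _) hlo

theorem my_phi_convex {a : ℝ} (ha : 0 ≤ a) :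
    ConvexOn ℝ (Set.Icc (0:ℝ) 1) (fun y => -Real.log (1 - y + y * Real.exp (-a))) ∧
    ContinuousOn (fun y => -Real.log (1 - y + y * Real.exp (-a))) (Set.Icc (0:ℝ) 1) := by
  have haff : ∀ y : ℝ, ((AffineMap.lineMap (1:ℝ) (Real.exp (-a)) : ℝ →ᵃ[ℝ] ℝ) y)
      = 1 - y + y * Real.exp (-a) := by
    intro y
    simp [AffineMap.lineMap_apply]
    ring
  have hpos : ∀ y ∈ Set.Icc (0:ℝ) 1, 0 < 1 - y + y * Real.exp (-a) :=
    fun y hy => (my_log_C_bounds ha hy).2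
  constructor
  · have h1 : ConcaveOn ℝ ((AffineMap.lineMap (1:ℝ) (Real.exp (-a)) : ℝ →ᵃ[ℝ] ℝ) ⁻¹' Set.Ioi 0)
        (Real.log ∘ (AffineMap.lineMap (1:ℝ) (Real.exp (-a)) : ℝ →ᵃ[ℝ] ℝ)) :=
      (strictConcaveOn_log_Ioi.concaveOn).comp_affineMap _
    have hsub : Set.Icc (0:ℝ) 1 ⊆
        ((AffineMap.lineMap (1:ℝ) (Real.exp (-a)) : ℝ →ᵃ[ℝ] ℝ) ⁻¹' Set.Ioi 0) := by
      intro y hy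
      simp only [Set.mem_preimage, Set.mem_Ioi, haff y]
      exact hpos y hy
    have h2 : ConcaveOn ℝ (Set.Icc (0:ℝ) 1)
        (fun y => Real.log (1 - y + y * Real.exp (-a))) := by
      have := (h1.subset hsub (convex_Icc 0 1))
      refine ConcaveOn.congr this ?_
      intro y _
      simp [Function.comp, haff y]
    exact h2.neg
  · refine ContinuousOn.neg ?_
    refine ContinuousOn.comp Real.continuousOn_log ?_ ?_
    · fun_prop
    · intro y hy
      exact (hpos y hy).ne'


theorem my_integrable_of_bounded' {α : Type*} [MeasurableSpace α] {μ : Measure α}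
    [IsFiniteMeasure μ] {f : α → ℝ} (hf : AEStronglyMeasurable f μ) {B : ℝ}
    (hB : ∀ x, |f x| ≤ B) : Integrable f μ :=
  (integrable_const B).mono' hf (ae_of_all _ fun x => by
    simpa [Real.norm_eq_abs] using hB x)

theorem my_exp_convex_bound' {l a : ℝ} (hl : l ∈ Set.Icc (0:ℝ) 1) :
    Real.exp (-(a * l)) ≤ 1 - l + l * Real.exp (-a) := by
  obtain ⟨h0, h1⟩ := hl
  have h := convexOn_exp.2 (Set.mem_univ (0:ℝ)) (Set.mem_univ (-a))
    (by linarith : (0:ℝ) ≤ 1 - l) h0 (by ring)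
  simp only [smul_eq_mul, mul_zero, zero_add, Real.exp_zero, mul_one] at h
  calc Real.exp (-(a * l)) = Real.exp ((1-l) * 0 + l * (-a)) := by ring_nf
    _ ≤ (1-l) * 1 + l * Real.exp (-a) := by simpa using h
    _ = 1 - l + l * Real.exp (-a) := by ring

theorem my_one_sample {Z : Type*} [MeasurableSpace Z] (D : Measure Z) [IsProbabilityMeasure D]
    (ℓ : Z → ℝ) (hℓ : Measurable ℓ) (hℓ01 : ∀ z, ℓ z ∈ Set.Icc (0:ℝ) 1) (a : ℝ) :
    ∫⁻ z, ENNReal.ofReal (Real.exp (-(a * ℓ z))) ∂D ≤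
      ENNReal.ofReal (1 - (∫ z, ℓ z ∂D) + (∫ z, ℓ z ∂D) * Real.exp (-a)) := by
  have hint : Integrable (fun z => Real.exp (-(a * ℓ z))) D := by
    refine my_integrable_of_bounded'
      (Real.measurable_exp.comp ((hℓ.const_mul a).neg)).aestronglyMeasurable
      (B := Real.exp |a|) ?_
    intro z
    rw [abs_of_pos (Real.exp_pos _)]
    refine Real.exp_le_exp.mpr ?_
    have h1 := (hℓ01 z).1; have h2 := (hℓ01 z).2
    rcases abs_cases a with ⟨h, _⟩ | ⟨h, _⟩ <;> nlinarith [abs_nonneg a]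
  rw [← ofReal_integral_eq_lintegral_ofReal hint (ae_of_all _ fun z => (Real.exp_pos _).le)]
  refine ENNReal.ofReal_le_ofReal ?_
  have hlint : Integrable ℓ D := my_integrable_of_bounded' hℓ.aestronglyMeasurable (B := 1)
    (fun z => abs_le.mpr ⟨by linarith [(hℓ01 z).1], (hℓ01 z).2⟩)
  have : ∫ z, Real.exp (-(a * ℓ z)) ∂D ≤ ∫ z, (1 - ℓ z + ℓ z * Real.exp (-a)) ∂D := by
    refine integral_mono hint ?_ (fun z => my_exp_convex_bound' (hℓ01 z))
    exact ((integrable_const (1:ℝ)).sub hlint).add (hlint.mul_const _)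
  refine this.trans (le_of_eq ?_)
  rw [integral_add (f := fun z => 1 - ℓ z) (g := fun z => ℓ z * Real.exp (-a))
      ((integrable_const (1:ℝ)).sub hlint) (hlint.mul_const _),
    integral_sub (integrable_const (1:ℝ)) hlint, integral_mul_const]
  simp

theorem my_ofReal_prod {ι : Type*} (s : Finset ι) (f : ι → ℝ) (h : ∀ i ∈ s, 0 ≤ f i) :
    ENNReal.ofReal (∏ i ∈ s, f i) = ∏ i ∈ s, ENNReal.ofReal (f i) := by
  induction s using Finset.cons_induction with
  | empty => simp
  | cons i s his ih =>
      rw [Finset.prod_cons, Finset.prod_cons,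
        ENNReal.ofReal_mul (h i (Finset.mem_cons_self i s)),
        ih (fun j hj => h j (Finset.mem_cons.mpr (Or.inr hj)))]

theorem my_task_mgf {Z : Type*} [MeasurableSpace Z] (D : Measure Z) [IsProbabilityMeasure D]
    (k : ℕ) (ℓ : Z → ℝ) (hℓ : Measurable ℓ) (a C : ℝ) (hCpos : 0 < C)
    (h1 : ∫⁻ z, ENNReal.ofReal (Real.exp (-(a * ℓ z))) ∂D ≤ ENNReal.ofReal C) :
    ∫⁻ s : Fin k → Z, ENNReal.ofReal (Real.exp (-((k:ℝ) * Real.log C) - a * ∑ j, ℓ (s j)))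
      ∂(Measure.pi fun _ : Fin k => D) ≤ 1 := by
  have hsplit : ∀ s : Fin k → Z,
      ENNReal.ofReal (Real.exp (-((k:ℝ) * Real.log C) - a * ∑ j, ℓ (s j)))
        = ENNReal.ofReal (Real.exp (-((k:ℝ) * Real.log C))) *
          ∏ j, ENNReal.ofReal (Real.exp (-(a * ℓ (s j)))) := by
    intro s
    have harith : -((k:ℝ) * Real.log C) - a * ∑ j, ℓ (s j)
        = -((k:ℝ) * Real.log C) + ∑ j, -(a * ℓ (s j)) := by
      rw [Finset.mul_sum, sub_eq_add_neg, ← Finset.sum_neg_distrib]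
    rw [harith, Real.exp_add, Real.exp_sum,
      ENNReal.ofReal_mul (Real.exp_pos _).le,
      my_ofReal_prod _ _ (fun j _ => (Real.exp_pos _).le)]
  simp_rw [hsplit]
  have hfmeas : ∀ j : Fin k, Measurable fun z => ENNReal.ofReal (Real.exp (-(a * ℓ z))) :=
    fun j => ENNReal.measurable_ofReal.comp (Real.measurable_exp.comp ((hℓ.const_mul a).neg))
  have hmeas : Measurable fun s : Fin k → Z => ∏ j, ENNReal.ofReal (Real.exp (-(a * ℓ (s j)))) :=
    Finset.measurable_prod _ fun j _ => (hfmeas j).comp (measurable_pi_apply j)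
  rw [lintegral_const_mul _ hmeas,
    my_lintegral_pi_prod (fun _ : Fin k => D) (fun j z => ENNReal.ofReal (Real.exp (-(a * ℓ z))))
      (fun j => hfmeas j)]
  have hC0 : (ENNReal.ofReal C) ≠ 0 := (ENNReal.ofReal_pos.mpr hCpos).ne'
  have hexpA : ENNReal.ofReal (Real.exp (-((k:ℝ) * Real.log C)))
      = ((ENNReal.ofReal C) ^ k)⁻¹ := by
    have h4 : Real.exp ((k:ℝ) * Real.log C) = C ^ k := by
      rw [Real.exp_nat_mul, Real.exp_log hCpos]
    rw [Real.exp_neg, h4, ENNReal.ofReal_inv_of_pos (pow_pos hCpos k),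
      ENNReal.ofReal_pow hCpos.le]
  calc ENNReal.ofReal (Real.exp (-((k:ℝ) * Real.log C))) *
        ∏ _j : Fin k, ∫⁻ z, ENNReal.ofReal (Real.exp (-(a * ℓ z))) ∂D
      ≤ ENNReal.ofReal (Real.exp (-((k:ℝ) * Real.log C))) * ∏ _j : Fin k, ENNReal.ofReal C := by
        exact mul_le_mul_right (Finset.prod_le_prod' fun j _ => h1) _
    _ = 1 := by
        rw [hexpA, Finset.prod_const, Finset.card_univ, Fintype.card_fin]
        exact ENNReal.inv_mul_cancel (pow_ne_zero _ hC0)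
          (ENNReal.pow_ne_top ENNReal.ofReal_ne_top)


theorem my_integrable_of_bounded {α : Type*} [MeasurableSpace α] {μ : Measure α}
    [IsFiniteMeasure μ] {f : α → ℝ} (hf : AEStronglyMeasurable f μ) {B : ℝ}
    (hB : ∀ x, |f x| ≤ B) : Integrable f μ :=
  (integrable_const B).mono' hf (ae_of_all _ fun x => by
    simpa [Real.norm_eq_abs] using hB x)

theorem my_phi_jensen {β : Type*} [MeasurableSpace β] (μ : Measure β) [IsProbabilityMeasure μ]
    {a : ℝ} (ha : 0 ≤ a) {p : β → ℝ} (hp : Measurable p) (hp01 : ∀ x, p x ∈ Set.Icc (0:ℝ) 1) :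
    -Real.log (1 - (∫ x, p x ∂μ) + (∫ x, p x ∂μ) * Real.exp (-a)) ≤
      ∫ x, -Real.log (1 - p x + p x * Real.exp (-a)) ∂μ := by
  obtain ⟨hconv, hcont⟩ := my_phi_convex (a := a) ha
  have hpint : Integrable p μ :=
    my_integrable_of_bounded hp.aestronglyMeasurable (B := 1)
      (fun x => abs_le.mpr ⟨by linarith [(hp01 x).1], (hp01 x).2⟩)
  have hgp : Integrable ((fun y => -Real.log (1 - y + y * Real.exp (-a))) ∘ p) μ := by
    refine my_integrable_of_bounded ?_ (B := a) ?_
    · refine (Measurable.neg ?_).aestronglyMeasurable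
      exact Real.measurable_log.comp (by fun_prop)
    · intro x
      obtain ⟨⟨hlo, hhi⟩, _⟩ := my_log_C_bounds ha (hp01 x)
      rw [abs_le]
      constructor <;> simp only [Function.comp_apply] <;> linarith
  exact hconv.map_integral_le hcont isClosed_Icc (ae_of_all _ hp01) hpint hgp

theorem my_dv {α : Type*} [MeasurableSpace α] (μ ν : Measure α)
    [IsProbabilityMeasure μ] [IsFiniteMeasure ν] {G : α → ℝ} (hG : Measurable G)
    {B : ℝ} (hB : ∀ x, |G x| ≤ B) {c : ℝ} (hc : 0 < c)
    (hW : ∫⁻ x, ENNReal.ofReal (Real.exp (G x)) ∂ν ≤ ENNReal.ofReal c) :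
    ENNReal.ofReal ((∫ x, G x ∂μ) - Real.log c) ≤ KLdiv μ ν := by
  unfold KLdiv
  split_ifs with hKL
  swap
  · exact le_top
  obtain ⟨hac, hint⟩ := hKL
  refine ENNReal.ofReal_le_ofReal ?_
  set ρ : α → ℝ≥0∞ := μ.rnDeriv ν with hρ
  have hρmeas : Measurable ρ := Measure.measurable_rnDeriv μ ν
  have hwd : ν.withDensity ρ = μ := Measure.withDensity_rnDeriv_eq μ ν hac
  have hρtop_ν : ∀ᵐ x ∂ν, ρ x ≠ ⊤ := Measure.rnDeriv_ne_top μ ν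
  set h : α → ℝ := fun x => G x - Real.log (ρ x).toReal with hh
  have hGint : Integrable G μ := my_integrable_of_bounded hG.aestronglyMeasurable hB
  have hhint : Integrable h μ := hGint.sub hint
  have hhmeas : Measurable h := hG.sub (Real.measurable_log.comp hρmeas.ennreal_toReal)
  -- key lintegral bound
  have key : ∫⁻ x, ENNReal.ofReal (Real.exp (h x)) ∂μ ≤ ENNReal.ofReal c := by
    have h1 : ∫⁻ x, ENNReal.ofReal (Real.exp (h x)) ∂μ
        = ∫⁻ x, (ρ * fun y => ENNReal.ofReal (Real.exp (h y))) x ∂ν := by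
      rw [← hwd, lintegral_withDensity_eq_lintegral_mul ν hρmeas]
      exact (ENNReal.measurable_ofReal.comp (Real.measurable_exp.comp hhmeas))
    rw [h1]
    refine le_trans (le_trans (lintegral_mono_ae ?_) le_rfl) hW
    filter_upwards [hρtop_ν] with x hxt
    rcases eq_or_ne (ρ x) 0 with h0 | h0
    · simp [h0]
    · have htR : 0 < (ρ x).toReal := ENNReal.toReal_pos h0 hxt
      have : Real.exp (h x) = Real.exp (G x) / (ρ x).toReal := by
        rw [hh]
        simp only []
        rw [Real.exp_sub, Real.exp_log htR]
      simp only [Pi.mul_apply, this]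
      nth_rewrite 1 [← ENNReal.ofReal_toReal hxt]
      rw [← ENNReal.ofReal_mul htR.le, mul_div_cancel₀ _ htR.ne']
  have hehint : Integrable (fun x => Real.exp (h x)) μ := by
    refine ⟨(Real.measurable_exp.comp hhmeas).aestronglyMeasurable, ?_⟩
    rw [hasFiniteIntegral_iff_ofReal (ae_of_all _ fun x => (Real.exp_pos _).le)]
    exact lt_of_le_of_lt key ENNReal.ofReal_lt_top
  have hjen : Real.exp (∫ x, h x ∂μ) ≤ ∫ x, Real.exp (h x) ∂μ := by
    have := convexOn_exp.map_integral_le (s := Set.univ)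
      Real.continuous_exp.continuousOn isClosed_univ
      (ae_of_all _ fun _ => Set.mem_univ _) hhint hehint
    simpa [Function.comp] using this
  have h2 : ∫ x, Real.exp (h x) ∂μ ≤ c := by
    have heq := ofReal_integral_eq_lintegral_ofReal hehint
      (ae_of_all _ fun x => (Real.exp_pos _).le)
    have : ENNReal.ofReal (∫ x, Real.exp (h x) ∂μ) ≤ ENNReal.ofReal c := heq ▸ key
    exact (ENNReal.ofReal_le_ofReal_iff hc.le).mp this
  have h3 : ∫ x, h x ∂μ ≤ Real.log c :=
    (Real.le_log_iff_exp_le hc).mpr (hjen.trans h2)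
  rw [hh] at h3
  rw [integral_sub hGint hint] at h3
  linarith

theorem stmt3
    {F : Type*} [MeasurableSpace F] {n : ℕ} (hn : 0 < n)
    {Z : Fin n → Type*} [∀ i, MeasurableSpace (Z i)]
    (D : ∀ i, Measure (Z i)) [∀ i, IsProbabilityMeasure (D i)]
    (m : Fin n → ℕ) (hm : ∀ i, 0 < m i)
    (ℓ : ∀ i, F → Z i → ℝ)
    (hℓmeas : ∀ i, Measurable (Function.uncurry (ℓ i)))
    (hℓ01 : ∀ i f z, ℓ i f z ∈ Set.Icc (0 : ℝ) 1)
    (Pri : Measure (Measure F)) [IsProbabilityMeasure Pri]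
    (hPri : ∀ᵐ P ∂Pri, IsProbabilityMeasure P)
    (δ : ℝ) (hδ : 0 < δ)
    (lam : Fin n → ℝ) (hlam : ∀ i, 0 < lam i)
    (𝔮 : (∀ i, Fin (m i) → Z i) → Measure (Measure F))
    (Q : (∀ i, Fin (m i) → Z i) → ∀ i : Fin n, Measure F)
    (h𝔮meas : Measurable 𝔮) (hQmeas : ∀ i, Measurable fun S => Q S i)
    (h𝔮prob : ∀ S, IsProbabilityMeasure (𝔮 S))
    (h𝔮prob' : ∀ S, ∀ᵐ P ∂(𝔮 S), IsProbabilityMeasure P)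
    (hQprob : ∀ S i, IsProbabilityMeasure (Q S i)) :
    (Measure.pi fun i => Measure.pi fun _ : Fin (m i) => D i)
      {S | ¬ (ENNReal.ofReal
            ((-(∑ i, (m i : ℝ) *
                Real.log (1 - (∫ f, (∫ z, ℓ i f z ∂(D i)) ∂(Q S i)) +
                  (∫ f, (∫ z, ℓ i f z ∂(D i)) ∂(Q S i)) * Real.exp (-(lam i) / (n * m i))))) -
              (n : ℝ)⁻¹ * (∑ i, lam i * ((m i : ℝ)⁻¹ * ∑ j, ∫ f, ℓ i f (S i j) ∂(Q S i))) -
              Real.log (1 / δ)) ≤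
          KLdiv ((𝔮 S).prod (Measure.pi fun i => Q S i)) (priorProc Pri n))}
      ≤ ENNReal.ofReal δ := by
  classical
  by_cases hker : AEMeasurable
      (fun P : Measure F => (Measure.dirac P).prod (Measure.pi fun _ : Fin n => P)) Pri
  swap
  · have h0 : priorProc Pri n = 0 := by
      have : priorProc Pri n = Measure.join (Measure.map
          (fun P : Measure F => (Measure.dirac P).prod (Measure.pi fun _ : Fin n => P)) Pri) := rfl
      rw [this, Measure.map_of_not_aemeasurable hker]
      simp
    have hKL : ∀ S : ∀ i, Fin (m i) → Z i,
        KLdiv ((𝔮 S).prod (Measure.pi fun i => Q S i)) (priorProc Pri n) = ⊤ := by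
      intro S
      rw [h0]
      unfold KLdiv
      rw [if_neg]
      rintro ⟨hac, -⟩
      haveI := h𝔮prob S
      haveI : ∀ i, IsProbabilityMeasure (Q S i) := hQprob S
      have h1 : ((𝔮 S).prod (Measure.pi fun i => Q S i)) Set.univ = 0 := hac (by simp)
      rw [measure_univ] at h1
      exact one_ne_zero h1
    have hempty : {S : ∀ i, Fin (m i) → Z i | ¬ (ENNReal.ofReal
            ((-(∑ i, (m i : ℝ) *
                Real.log (1 - (∫ f, (∫ z, ℓ i f z ∂(D i)) ∂(Q S i)) +
                  (∫ f, (∫ z, ℓ i f z ∂(D i)) ∂(Q S i)) * Real.exp (-(lam i) / (n * m i))))) -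
              (n : ℝ)⁻¹ * (∑ i, lam i * ((m i : ℝ)⁻¹ * ∑ j, ∫ f, ℓ i f (S i j) ∂(Q S i))) -
              Real.log (1 / δ)) ≤
          KLdiv ((𝔮 S).prod (Measure.pi fun i => Q S i)) (priorProc Pri n))} = ∅ := by
      ext S
      simp only [Set.mem_setOf_eq, Set.mem_empty_iff_false, iff_false, not_not]
      rw [hKL S]
      exact le_top
    rw [hempty]
    simp only [measure_empty]
    exact zero_le
  -- main case
  have hnR : (0:ℝ) < n := by exact_mod_cast hn
  have hmR : ∀ i, (0:ℝ) < m i := fun i => by exact_mod_cast hm i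
  set a : Fin n → ℝ := fun i => lam i / ((n : ℝ) * (m i : ℝ)) with ha_def
  have ha : ∀ i, 0 < a i := fun i => div_pos (hlam i) (mul_pos hnR (hmR i))
  set p : ∀ i : Fin n, F → ℝ := fun i f => ∫ z, ℓ i f z ∂(D i) with hp_def
  have hℓzmeas : ∀ i f, Measurable fun z => ℓ i f z :=
    fun i f => (hℓmeas i).comp measurable_prodMk_left
  have hℓfmeas : ∀ i (s : Z i), Measurable fun f => ℓ i f s :=
    fun i s => (hℓmeas i).comp measurable_prodMk_right
  have hℓint : ∀ i f, Integrable (fun z => ℓ i f z) (D i) := fun i f =>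
    my_integrable_of_bounded' (hℓzmeas i f).aestronglyMeasurable (B := 1)
      (fun z => abs_le.mpr ⟨by linarith [(hℓ01 i f z).1], (hℓ01 i f z).2⟩)
  have hpmeas : ∀ i, Measurable (p i) := by
    intro i
    exact ((hℓmeas i).stronglyMeasurable.integral_prod_right' (ν := D i)).measurable
  have hp01 : ∀ i f, p i f ∈ Set.Icc (0:ℝ) 1 := by
    intro i f
    constructor
    · exact integral_nonneg fun z => (hℓ01 i f z).1
    · calc ∫ z, ℓ i f z ∂(D i) ≤ ∫ _z, (1:ℝ) ∂(D i) :=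
            integral_mono (hℓint i f) (integrable_const 1) (fun z => (hℓ01 i f z).2)
        _ = 1 := by simp
  set C : ∀ i : Fin n, F → ℝ := fun i f => 1 - p i f + p i f * Real.exp (-(a i)) with hC_def
  have hCfacts : ∀ i f, (-(a i) ≤ Real.log (C i f) ∧ Real.log (C i f) ≤ 0) ∧ 0 < C i f :=
    fun i f => my_log_C_bounds (ha i).le (hp01 i f)
  set g : ∀ i : Fin n, F → (Fin (m i) → Z i) → ℝ :=
    fun i f s => -((m i : ℝ) * Real.log (C i f)) - a i * ∑ j, ℓ i f (s j) with hg_def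
  have hsumbd : ∀ i f (s : Fin (m i) → Z i),
      0 ≤ ∑ j, ℓ i f (s j) ∧ ∑ j, ℓ i f (s j) ≤ (m i : ℝ) := by
    intro i f s
    constructor
    · exact Finset.sum_nonneg fun j _ => (hℓ01 i f (s j)).1
    · calc ∑ j, ℓ i f (s j) ≤ ∑ _j : Fin (m i), (1:ℝ) :=
            Finset.sum_le_sum fun j _ => (hℓ01 i f (s j)).2
        _ = (m i : ℝ) := by simp
  have hgbound : ∀ i f s, |g i f s| ≤ 2 * (m i : ℝ) * a i := by
    intro i f s
    obtain ⟨⟨hl1, hl2⟩, -⟩ := hCfacts i f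
    obtain ⟨hs1, hs2⟩ := hsumbd i f s
    have hai := ha i
    have hmi := hmR i
    rw [hg_def, abs_le]
    constructor
    · simp only []
      nlinarith [mul_le_mul_of_nonneg_left hs2 hai.le]
    · simp only []
      nlinarith [mul_le_mul_of_nonneg_left hs1 hai.le, mul_le_mul_of_nonneg_left hs2 hai.le]
  have hlogCmeas : ∀ i, Measurable fun f => Real.log (C i f) := by
    intro i
    refine Real.measurable_log.comp ?_
    rw [hC_def]
    exact (measurable_const.sub (hpmeas i)).add ((hpmeas i).mul_const _)
  -- measurability of g in various variables
  have hgmeas_f : ∀ i (s : Fin (m i) → Z i), Measurable fun f => g i f s := by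
    intro i s
    rw [hg_def]
    exact (((hlogCmeas i).const_mul _).neg).sub
      ((Finset.measurable_sum _ fun j _ => hℓfmeas i (s j)).const_mul _)
  have hgmeas_s : ∀ i f, Measurable fun s : Fin (m i) → Z i => g i f s := by
    intro i f
    rw [hg_def]
    exact measurable_const.sub
      ((Finset.measurable_sum _ fun j _ =>
        (hℓzmeas i f).comp (measurable_pi_apply j)).const_mul _)
  have hgmeas2 : ∀ i : Fin n, Measurable
      (fun q : (∀ i, Fin (m i) → Z i) × (Measure F × (Fin n → F)) => g i (q.2.2 i) (q.1 i)) := by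
    intro i
    rw [hg_def]
    have hco : Measurable fun q : (∀ i, Fin (m i) → Z i) × (Measure F × (Fin n → F)) => q.2.2 i :=
      (measurable_pi_apply i).comp (measurable_snd.comp measurable_snd)
    refine Measurable.sub ?_ ?_
    · exact (((hlogCmeas i).comp hco).const_mul _).neg
    · refine Measurable.const_mul ?_ _
      refine Finset.measurable_sum _ fun j _ => ?_
      exact (hℓmeas i).comp (hco.prodMk
        ((measurable_pi_apply j).comp ((measurable_pi_apply i).comp measurable_fst)))
  set GE : (∀ i, Fin (m i) → Z i) × (Measure F × (Fin n → F)) → ℝ≥0∞ :=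
    fun q => ENNReal.ofReal (Real.exp (∑ i, g i (q.2.2 i) (q.1 i))) with hGE_def
  have hGEmeas : Measurable GE := by
    rw [hGE_def]
    exact ENNReal.measurable_ofReal.comp
      (Real.measurable_exp.comp (Finset.measurable_sum _ fun i _ => hgmeas2 i))
  set 𝔓 : Measure (Measure F × (Fin n → F)) := priorProc Pri n with h𝔓def
  haveI h𝔓prob : IsProbabilityMeasure 𝔓 := by
    constructor
    have hbj : 𝔓 = Measure.join (Measure.map
        (fun P : Measure F => (Measure.dirac P).prod (Measure.pi fun _ : Fin n => P)) Pri) := rfl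
    rw [hbj, Measure.join_apply MeasurableSet.univ,
      lintegral_map' (Measure.measurable_coe MeasurableSet.univ).aemeasurable hker]
    have : ∀ᵐ P ∂Pri,
        ((Measure.dirac P).prod (Measure.pi fun _ : Fin n => P)) Set.univ = 1 := by
      filter_upwards [hPri] with P hP
      haveI := hP
      exact measure_univ
    rw [lintegral_congr_ae this]
    simp
  -- per-task mgf bound
  have htask : ∀ i f, ∫⁻ s : Fin (m i) → Z i, ENNReal.ofReal (Real.exp (g i f s))
      ∂(Measure.pi fun _ : Fin (m i) => D i) ≤ 1 := by
    intro i f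
    have hsample : ∫⁻ z, ENNReal.ofReal (Real.exp (-(a i * ℓ i f z))) ∂(D i)
        ≤ ENNReal.ofReal (C i f) := by
      have := my_one_sample (D i) (fun z => ℓ i f z) (hℓzmeas i f) (hℓ01 i f) (a i)
      rw [hC_def]
      exact this
    have := my_task_mgf (D i) (m i) (fun z => ℓ i f z) (hℓzmeas i f) (a i) (C i f)
      (hCfacts i f).2 hsample
    rw [hg_def]
    exact this
  -- step 5 : integral over all samples
  have hstep5 : ∀ ω : Measure F × (Fin n → F),
      ∫⁻ S, GE (S, ω) ∂(Measure.pi fun i => Measure.pi fun _ : Fin (m i) => D i) ≤ 1 := by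
    intro ω
    have hsplit : ∀ S : ∀ i, Fin (m i) → Z i,
        GE (S, ω) = ∏ i, ENNReal.ofReal (Real.exp (g i (ω.2 i) (S i))) := by
      intro S
      rw [hGE_def]
      simp only []
      rw [Real.exp_sum, my_ofReal_prod _ _ (fun i _ => (Real.exp_pos _).le)]
    simp_rw [hsplit]
    rw [my_lintegral_pi_prod (fun i => Measure.pi fun _ : Fin (m i) => D i)
      (fun i s => ENNReal.ofReal (Real.exp (g i (ω.2 i) s)))
      (fun i => ENNReal.measurable_ofReal.comp (Real.measurable_exp.comp (hgmeas_s i (ω.2 i))))]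
    calc ∏ i, ∫⁻ s, ENNReal.ofReal (Real.exp (g i (ω.2 i) s))
          ∂(Measure.pi fun _ : Fin (m i) => D i)
        ≤ ∏ _i : Fin n, 1 := Finset.prod_le_prod' fun i _ => htask i (ω.2 i)
      _ = 1 := by simp
  set W : (∀ i, Fin (m i) → Z i) → ℝ≥0∞ := fun S => ∫⁻ ω, GE (S, ω) ∂𝔓 with hW_def
  have hWmeas : Measurable W := by
    rw [hW_def]
    exact hGEmeas.lintegral_prod_right'
  have hWtotal : ∫⁻ S, W S ∂(Measure.pi fun i => Measure.pi fun _ : Fin (m i) => D i) ≤ 1 := by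
    have hswap := lintegral_lintegral_swap
      (μ := Measure.pi fun i => Measure.pi fun _ : Fin (m i) => D i) (ν := 𝔓)
      (f := fun S ω => GE (S, ω)) hGEmeas.aemeasurable
    rw [hW_def]
    calc ∫⁻ S, ∫⁻ ω, GE (S, ω) ∂𝔓
          ∂(Measure.pi fun i => Measure.pi fun _ : Fin (m i) => D i)
        = ∫⁻ ω, ∫⁻ S, GE (S, ω)
            ∂(Measure.pi fun i => Measure.pi fun _ : Fin (m i) => D i) ∂𝔓 := hswap
      _ ≤ ∫⁻ _ω, 1 ∂𝔓 := lintegral_mono hstep5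
      _ = 1 := by simp
  set ε : ℝ≥0∞ := ENNReal.ofReal (1/δ) with hε_def
  have hε0 : ε ≠ 0 := by
    rw [hε_def]
    exact (ENNReal.ofReal_pos.mpr (by positivity)).ne'
  have hεtop : ε ≠ ⊤ := ENNReal.ofReal_ne_top
  have hMarkov : (Measure.pi fun i => Measure.pi fun _ : Fin (m i) => D i) {S | ε ≤ W S}
      ≤ ENNReal.ofReal δ := by
    have h2 : ε * (Measure.pi fun i => Measure.pi fun _ : Fin (m i) => D i) {S | ε ≤ W S} ≤ 1 :=
      (mul_meas_ge_le_lintegral₀ hWmeas.aemeasurable ε).trans hWtotal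
    have h3 : (Measure.pi fun i => Measure.pi fun _ : Fin (m i) => D i) {S | ε ≤ W S} ≤ ε⁻¹ := by
      calc (Measure.pi fun i => Measure.pi fun _ : Fin (m i) => D i) {S | ε ≤ W S}
          = ε⁻¹ * (ε * (Measure.pi fun i => Measure.pi fun _ : Fin (m i) => D i) {S | ε ≤ W S}) := by
            rw [← mul_assoc, ENNReal.inv_mul_cancel hε0 hεtop, one_mul]
        _ ≤ ε⁻¹ * 1 := mul_le_mul_right h2 _
        _ = ε⁻¹ := mul_one _
    have hεinv : ε⁻¹ = ENNReal.ofReal δ := by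
      rw [hε_def, one_div, ENNReal.ofReal_inv_of_pos hδ, inv_inv]
    rw [← hεinv]
    exact h3
  refine le_trans (measure_mono ?_) hMarkov
  intro S hS
  simp only [Set.mem_setOf_eq] at hS ⊢
  by_contra hWS
  apply hS
  have hWle : W S ≤ ε := (not_le.mp hWS).le
  -- posterior
  haveI := h𝔮prob S
  haveI hQpi : ∀ i, IsProbabilityMeasure (Q S i) := hQprob S
  -- DV
  have hGωmeas : Measurable fun ω : Measure F × (Fin n → F) => ∑ i, g i (ω.2 i) (S i) := by
    refine Finset.measurable_sum _ fun i _ => ?_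
    exact (hgmeas_f i (S i)).comp ((measurable_pi_apply i).comp measurable_snd)
  have hBG : ∀ ω : Measure F × (Fin n → F),
      |∑ i, g i (ω.2 i) (S i)| ≤ ∑ i, 2 * (m i : ℝ) * a i := by
    intro ω
    refine (Finset.abs_sum_le_sum_abs _ _).trans ?_
    exact Finset.sum_le_sum fun i _ => hgbound i (ω.2 i) (S i)
  have hWraw : ∫⁻ ω, ENNReal.ofReal (Real.exp (∑ i, g i (ω.2 i) (S i))) ∂𝔓
      ≤ ENNReal.ofReal (1/δ) := by
    rw [hε_def] at hWle
    rw [hW_def, hGE_def] at hWle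
    exact hWle
  have hdv := my_dv ((𝔮 S).prod (Measure.pi fun i => Q S i)) 𝔓 hGωmeas hBG
    (c := 1/δ) (by positivity) hWraw
  refine le_trans (ENNReal.ofReal_le_ofReal ?_) hdv
  refine sub_le_sub_right ?_ _
  -- marginal decomposition
  have hQmarg : ∫ ω, (∑ i, g i (ω.2 i) (S i)) ∂((𝔮 S).prod (Measure.pi fun i => Q S i))
      = ∑ i, ∫ f, g i f (S i) ∂(Q S i) := by
    have hmeasx : Measurable fun x : Fin n → F => ∑ i, g i (x i) (S i) :=
      Finset.measurable_sum _ fun i _ => (hgmeas_f i (S i)).comp (measurable_pi_apply i)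
    have hsnd : ((𝔮 S).prod (Measure.pi fun i => Q S i)).map Prod.snd
        = Measure.pi fun i => Q S i := by
      rw [Measure.map_snd_prod, measure_univ, one_smul]
    have h1 : ∫ ω, (∑ i, g i (ω.2 i) (S i)) ∂((𝔮 S).prod (Measure.pi fun i => Q S i))
        = ∫ x, (∑ i, g i (x i) (S i))
            ∂(((𝔮 S).prod (Measure.pi fun i => Q S i)).map Prod.snd) :=
      (integral_map measurable_snd.aemeasurable hmeasx.aestronglyMeasurable).symm
    rw [h1, hsnd]
    rw [integral_finset_sum _ (fun i _ => my_integrable_of_bounded'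
      (f := fun x : Fin n → F => g i (x i) (S i))
      ((hgmeas_f i (S i)).comp (measurable_pi_apply i)).aestronglyMeasurable
      (B := 2 * (m i : ℝ) * a i) (fun x => hgbound i (x i) (S i)))]
    refine Finset.sum_congr rfl fun i _ => ?_
    have h2 : ∫ f, g i f (S i) ∂(Q S i)
        = ∫ x, g i (x i) (S i) ∂(Measure.pi fun j => Q S j) := by
      rw [← my_map_eval_pi (fun j => Q S j) i,
        integral_map (measurable_pi_apply i).aemeasurable
          (hgmeas_f i (S i)).aestronglyMeasurable]
    rw [h2]
  rw [hQmarg]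
  -- per-task Jensen
  have hclaim : ∀ i : Fin n,
      -((m i : ℝ) * Real.log (1 - (∫ f, p i f ∂(Q S i)) +
          (∫ f, p i f ∂(Q S i)) * Real.exp (-(a i))))
        - a i * ∑ j, ∫ f, ℓ i f (S i j) ∂(Q S i)
      ≤ ∫ f, g i f (S i) ∂(Q S i) := by
    intro i
    have hjen := my_phi_jensen (Q S i) (ha i).le (hpmeas i) (hp01 i)
    have hint1 : Integrable (fun f => -((m i : ℝ) * Real.log (C i f))) (Q S i) :=
      my_integrable_of_bounded' ((((hlogCmeas i).const_mul _).neg).aestronglyMeasurable)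
        (B := (m i : ℝ) * a i) (fun f => by
          obtain ⟨⟨hl1, hl2⟩, -⟩ := hCfacts i f
          rw [abs_le]
          constructor <;> nlinarith [hmR i, ha i])
    have hint2 : Integrable (fun f => a i * ∑ j, ℓ i f (S i j)) (Q S i) :=
      my_integrable_of_bounded'
        (((Finset.measurable_sum _ fun j _ => hℓfmeas i (S i j)).const_mul _).aestronglyMeasurable)
        (B := a i * m i) (fun f => by
          obtain ⟨h1, h2⟩ := hsumbd i f (S i)
          rw [abs_le]
          constructor <;> nlinarith [ha i])
    have e0 : ∫ f, g i f (S i) ∂(Q S i)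
        = (∫ f, -((m i : ℝ) * Real.log (C i f)) ∂(Q S i))
          - ∫ f, a i * ∑ j, ℓ i f (S i j) ∂(Q S i) := by
      rw [hg_def]
      exact integral_sub hint1 hint2
    have e1 : ∫ f, -((m i : ℝ) * Real.log (C i f)) ∂(Q S i)
        = (m i : ℝ) * ∫ f, -Real.log (C i f) ∂(Q S i) := by
      simp_rw [neg_mul_eq_mul_neg]
      exact integral_const_mul _ _
    have e2 : ∫ f, a i * ∑ j, ℓ i f (S i j) ∂(Q S i)
        = a i * ∑ j, ∫ f, ℓ i f (S i j) ∂(Q S i) := by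
      rw [integral_const_mul]
      congr 1
      exact integral_finset_sum _ fun j _ => my_integrable_of_bounded'
        (hℓfmeas i (S i j)).aestronglyMeasurable (B := 1)
        (fun f => abs_le.mpr ⟨by linarith [(hℓ01 i f (S i j)).1], (hℓ01 i f (S i j)).2⟩)
    have hjen' : (m i : ℝ) * (-Real.log (1 - (∫ f, p i f ∂(Q S i)) +
          (∫ f, p i f ∂(Q S i)) * Real.exp (-(a i))))
        ≤ (m i : ℝ) * ∫ f, -Real.log (C i f) ∂(Q S i) := by
      refine mul_le_mul_of_nonneg_left ?_ (hmR i).le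
      refine hjen.trans (le_of_eq ?_)
      refine integral_congr_ae (ae_of_all _ fun f => ?_)
      rw [hC_def]
    rw [e0, e1, e2, neg_mul_eq_mul_neg]
    exact sub_le_sub_right hjen' _
  -- algebra
  refine le_trans (le_of_eq ?_) (Finset.sum_le_sum fun i _ => hclaim i)
  rw [← Finset.sum_neg_distrib, Finset.mul_sum, ← Finset.sum_sub_distrib]
  refine Finset.sum_congr rfl fun i _ => ?_
  have hexp : Real.exp (-(lam i) / ((n:ℝ) * (m i : ℝ))) = Real.exp (-(a i)) := by
    rw [ha_def]
    simp only []
    rw [neg_div]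
  have hcoef : (n:ℝ)⁻¹ * (lam i * ((m i:ℝ)⁻¹ * ∑ j, ∫ f, ℓ i f (S i j) ∂(Q S i)))
      = a i * ∑ j, ∫ f, ℓ i f (S i j) ∂(Q S i) := by
    rw [ha_def]
    simp only []
    field_simp
  rw [hexp, hcoef]
end
end

section
/- Hoeffding-type product moment bound with harmonic mean: In the multi-task setup, for any fixed probability measure 𝒫 on M(F) and any λ > 0, E_{(S_1,…,S_n) ∼ ⊗_i D_i^{⊗m_i}} [ E_{P∼𝒫} ∏_{i=1}^n E_{f∼P} exp( (λ/n) · ( er_i(f) − ĥer_i(f) ) ) ] ≤ exp( λ² / (8 n m_h) ), where m_h = n / (Σ_{i=1}^n 1/m_i) is the harmonic mean of the sample sizes m_1,…,m_n. -/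
open MeasureTheory ProbabilityTheory
open scoped ENNReal NNReal Classical

noncomputable section

/-! ### Auxiliary lemmas for `stmt16` -/

section Stmt16Aux

universe u

lemma bern_pos' {p : ℝ} (hp0 : 0 ≤ p) (hp1 : p ≤ 1) (s : ℝ) :
    0 < 1 - p + p * Real.exp s := by
  rcases eq_or_lt_of_le hp0 with h | h
  · simp [← h]
  · have h1 : 0 < p * Real.exp s := mul_pos h (Real.exp_pos s)
    nlinarith

/-- The analytic core of **Hoeffding's lemma**. -/
lemma hoeff_log_le' {p : ℝ} (hp0 : 0 ≤ p) (hp1 : p ≤ 1) (s : ℝ) :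
    Real.log (1 - p + p * Real.exp s) ≤ s * p + s ^ 2 / 8 := by
  set g : ℝ → ℝ := fun x => 1 - p + p * Real.exp x with hgdef
  have hgpos : ∀ x, 0 < g x := fun x => bern_pos' hp0 hp1 x
  have hgd : ∀ x, HasDerivAt g (p * Real.exp x) x := by
    intro x
    exact ((Real.hasDerivAt_exp x).const_mul p).const_add (1 - p)
  set G : ℝ → ℝ := fun x => p * Real.exp x / g x - (p + x / 4) with hGdef
  set Fn : ℝ → ℝ := fun x => Real.log (g x) - (x * p + x ^ 2 / 8) with hFdef
  have hFd : ∀ x, HasDerivAt Fn (G x) x := by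
    intro x
    have hlog : HasDerivAt (fun x => Real.log (g x)) (p * Real.exp x / g x) x :=
      (hgd x).log (hgpos x).ne'
    have h1 : HasDerivAt (fun x : ℝ => x * p) p x := by
      simpa using (hasDerivAt_id x).mul_const p
    have h2 : HasDerivAt (fun x : ℝ => x ^ 2 / 8) (x / 4) x := by
      have := (hasDerivAt_pow 2 x).div_const 8
      exact this.congr_deriv (by push_cast; ring)
    exact hlog.sub (h1.add h2)
  have hGd : ∀ x, HasDerivAt G
      ((p * Real.exp x * g x - p * Real.exp x * (p * Real.exp x)) / g x ^ 2 - 1 / 4) x := by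
    intro x
    have hq : HasDerivAt (fun x => p * Real.exp x / g x)
        ((p * Real.exp x * g x - p * Real.exp x * (p * Real.exp x)) / g x ^ 2) x :=
      ((Real.hasDerivAt_exp x).const_mul p).div (hgd x) (hgpos x).ne'
    have h3 : HasDerivAt (fun x : ℝ => p + x / 4) (1 / 4) x := by
      simpa using ((hasDerivAt_id x).div_const 4).const_add p
    exact hq.sub h3
  have hGanti : Antitone G := by
    refine antitone_of_deriv_nonpos (fun x => (hGd x).differentiableAt) fun x => ?_
    rw [(hGd x).deriv]
    have hgx : 0 < g x := hgpos x
    have ha : 0 ≤ p * Real.exp x := mul_nonneg hp0 (Real.exp_pos x).le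
    have hb : g x = (1 - p) + p * Real.exp x := by simp [hgdef]
    have key : (p * Real.exp x * g x - p * Real.exp x * (p * Real.exp x)) / g x ^ 2 ≤ 1 / 4 := by
      rw [div_le_iff₀ (by positivity)]
      nlinarith [sq_nonneg (p * Real.exp x - (1 - p)), hp1]
    linarith
  have hG0 : G 0 = 0 := by simp [hGdef, hgdef]
  have hF0 : Fn 0 = 0 := by simp [hFdef, hgdef]
  have hFdiff : Differentiable ℝ Fn := fun x => (hFd x).differentiableAt
  have hFle : Fn s ≤ 0 := by
    rcases le_total s 0 with hs | hs
    · have hmono : MonotoneOn Fn (Set.Iic 0) := by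
        refine monotoneOn_of_deriv_nonneg (convex_Iic 0) hFdiff.continuous.continuousOn
          (hFdiff.differentiableOn) fun x hx => ?_
        rw [interior_Iic, Set.mem_Iio] at hx
        rw [(hFd x).deriv]
        have := hGanti hx.le
        rw [hG0] at this
        linarith
      have := hmono (Set.mem_Iic.2 hs) (Set.mem_Iic.2 le_rfl) hs
      rwa [hF0] at this
    · have hanti : AntitoneOn Fn (Set.Ici 0) := by
        refine antitoneOn_of_deriv_nonpos (convex_Ici 0) hFdiff.continuous.continuousOn
          (hFdiff.differentiableOn) fun x hx => ?_
        rw [interior_Ici, Set.mem_Ioi] at hx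
        rw [(hFd x).deriv]
        have := hGanti hx.le
        rw [hG0] at this
        linarith
      have := hanti (Set.mem_Ici.2 le_rfl) (Set.mem_Ici.2 hs) hs
      rwa [hF0] at this
  have : Real.log (g s) - (s * p + s ^ 2 / 8) ≤ 0 := hFle
  simpa [hgdef] using by linarith

lemma exp_le_bern' {x : ℝ} (hx0 : 0 ≤ x) (hx1 : x ≤ 1) (s : ℝ) :
    Real.exp (s * x) ≤ 1 - x + x * Real.exp s := by
  have h := convexOn_exp.2 (Set.mem_univ (0 : ℝ)) (Set.mem_univ s)
    (by linarith : (0:ℝ) ≤ 1 - x) hx0 (by ring)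
  simpa [Real.exp_zero, mul_comm] using h

/-- Single-sample Hoeffding mgf bound, in `ℝ≥0∞` form. -/
lemma single_sample_bound' {Z : Type*} [MeasurableSpace Z] (D : Measure Z)
    [IsProbabilityMeasure D] {h : Z → ℝ} (hmeas : Measurable h)
    (h01 : ∀ z, h z ∈ Set.Icc (0 : ℝ) 1) (c : ℝ) :
    ∫⁻ z, ENNReal.ofReal (Real.exp (c * ((∫ z', h z' ∂D) - h z))) ∂D ≤
      ENNReal.ofReal (Real.exp (c ^ 2 / 8)) := by
  set p : ℝ := ∫ z', h z' ∂D with hp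
  have hInt : Integrable h D := by
    refine Integrable.mono' (integrable_const (1:ℝ)) hmeas.aestronglyMeasurable ?_
    exact ae_of_all _ fun z => by
      rw [Real.norm_eq_abs, abs_le]; exact ⟨by linarith [(h01 z).1], (h01 z).2⟩
  have hp0 : 0 ≤ p := integral_nonneg fun z => (h01 z).1
  have hp1 : p ≤ 1 := by
    calc p ≤ ∫ _, (1:ℝ) ∂D := integral_mono hInt (integrable_const 1) fun z => (h01 z).2
    _ = 1 := by simp
  have hpt : ∀ z, Real.exp (c * (p - h z)) ≤
      Real.exp (c * p) * (1 - h z + h z * Real.exp (-c)) := by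
    intro z
    have := exp_le_bern' (h01 z).1 (h01 z).2 (-c)
    calc Real.exp (c * (p - h z)) = Real.exp (c * p) * Real.exp (-c * h z) := by
          rw [← Real.exp_add]; ring_nf
      _ ≤ Real.exp (c * p) * (1 - h z + h z * Real.exp (-c)) := by
          exact mul_le_mul_of_nonneg_left this (Real.exp_pos _).le
  have hIntG : Integrable (fun z => Real.exp (c * p) * (1 - h z + h z * Real.exp (-c))) D := by
    exact (((integrable_const (1:ℝ)).sub hInt).add (hInt.mul_const _)).const_mul _
  calc ∫⁻ z, ENNReal.ofReal (Real.exp (c * (p - h z))) ∂D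
      ≤ ∫⁻ z, ENNReal.ofReal (Real.exp (c * p) * (1 - h z + h z * Real.exp (-c))) ∂D :=
        lintegral_mono fun z => ENNReal.ofReal_le_ofReal (hpt z)
    _ = ENNReal.ofReal (∫ z, Real.exp (c * p) * (1 - h z + h z * Real.exp (-c)) ∂D) := by
        rw [ofReal_integral_eq_lintegral_ofReal hIntG]
        exact ae_of_all _ fun z => by
          have h1 : (0:ℝ) ≤ 1 - h z := by linarith [(h01 z).2]
          have h2 : (0:ℝ) ≤ h z * Real.exp (-c) :=
            mul_nonneg (h01 z).1 (Real.exp_pos _).le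
          positivity
    _ ≤ ENNReal.ofReal (Real.exp (c ^ 2 / 8)) := by
        apply ENNReal.ofReal_le_ofReal
        have hval : ∫ z, Real.exp (c * p) * (1 - h z + h z * Real.exp (-c)) ∂D =
            Real.exp (c * p) * (1 - p + p * Real.exp (-c)) := by
          rw [integral_const_mul]
          congr 1
          have i1 : Integrable (fun z => 1 - h z) D := (integrable_const (1:ℝ)).sub hInt
          have i2 : Integrable (fun z => h z * Real.exp (-c)) D := hInt.mul_const _
          rw [integral_add i1 i2, integral_sub (integrable_const (1:ℝ)) hInt,
            integral_mul_const, integral_const]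
          simp [hp]
        rw [hval]
        have hlog := hoeff_log_le' hp0 hp1 (-c)
        have hexp : 1 - p + p * Real.exp (-c) ≤ Real.exp (-c * p + c ^ 2 / 8) := by
          have hpos := bern_pos' hp0 hp1 (-c)
          calc 1 - p + p * Real.exp (-c) = Real.exp (Real.log (1 - p + p * Real.exp (-c))) :=
                (Real.exp_log hpos).symm
            _ ≤ Real.exp (-c * p + c ^ 2 / 8) := by
                apply Real.exp_le_exp.2
                have h2 : (-c) ^ 2 = c ^ 2 := by ring
                linarith [h2 ▸ hlog]
        calc Real.exp (c * p) * (1 - p + p * Real.exp (-c))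
            ≤ Real.exp (c * p) * Real.exp (-c * p + c ^ 2 / 8) :=
              mul_le_mul_of_nonneg_left hexp (Real.exp_pos _).le
          _ = Real.exp (c ^ 2 / 8) := by rw [← Real.exp_add]; ring_nf

/-- Tonelli for finite products over `Measure.pi`. -/
lemma lintegral_pi_prod' : ∀ (n : ℕ) (α : Fin n → Type u) (inst : ∀ i, MeasurableSpace (α i))
    (μ : ∀ i, Measure (α i)) (_ : ∀ i, SigmaFinite (μ i)) (f : ∀ i, α i → ℝ≥0∞)
    (_ : ∀ i, Measurable (f i)),
    ∫⁻ x, ∏ i, f i (x i) ∂Measure.pi μ = ∏ i, ∫⁻ y, f i y ∂μ i := by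
  intro n
  induction n with
  | zero =>
    intro α inst μ hσ f hf
    simp only [Finset.univ_eq_empty, Finset.prod_empty]
    rw [lintegral_const, one_mul, Measure.pi_univ]
    simp
  | succ n ih =>
    intro α inst μ hσ f hf
    have hmp := measurePreserving_piFinSuccAbove μ 0
    set e := MeasurableEquiv.piFinSuccAbove α 0
    have hFmeas : Measurable (fun y : α 0 × (∀ j : Fin n, α ((0:Fin (n+1)).succAbove j)) =>
        f 0 y.1 * ∏ j, f ((0:Fin (n+1)).succAbove j) (y.2 j)) := by
      refine ((hf 0).comp measurable_fst).mul ?_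
      exact Finset.measurable_prod _ fun j _ =>
        (hf _).comp ((measurable_pi_apply j).comp measurable_snd)
    calc ∫⁻ x, ∏ i, f i (x i) ∂Measure.pi μ
        = ∫⁻ x, f 0 (x 0) * ∏ j, f ((0:Fin (n+1)).succAbove j) (x ((0:Fin (n+1)).succAbove j))
            ∂Measure.pi μ := by
          apply lintegral_congr fun x => ?_
          exact Fin.prod_univ_succAbove (fun i => f i (x i)) 0
      _ = ∫⁻ y, f 0 y.1 * ∏ j, f ((0:Fin (n+1)).succAbove j) (y.2 j)
            ∂((μ 0).prod (Measure.pi fun j => μ ((0:Fin (n+1)).succAbove j))) := by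
          rw [← hmp.map_eq, lintegral_map hFmeas e.measurable]
          rfl
      _ = (∫⁻ y, f 0 y ∂μ 0) *
            ∫⁻ z, ∏ j, f ((0:Fin (n+1)).succAbove j) (z j)
              ∂(Measure.pi fun j => μ ((0:Fin (n+1)).succAbove j)) := by
          exact lintegral_prod_mul (hf 0).aemeasurable
            (Finset.measurable_prod _ fun j _ =>
              (hf _).comp (measurable_pi_apply j)).aemeasurable
      _ = ∏ i, ∫⁻ y, f i y ∂μ i := by
          rw [ih _ _ _ (fun j => inferInstance) _ (fun j => hf _)]
          exact (Fin.prod_univ_succAbove (fun i => ∫⁻ y, f i y ∂μ i) 0).symm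

/-- Truncation of a measure to a probability measure (zero if not a probability measure). -/
def truncMeas {F : Type*} [MeasurableSpace F] (P : Measure F) : Measure F :=
  if P Set.univ = 1 then P else 0

lemma truncMeas_eq {F : Type*} [MeasurableSpace F] (P : Measure F) [IsProbabilityMeasure P] :
    truncMeas P = P := by simp [truncMeas, measure_univ]

lemma measurable_truncMeas {F : Type*} [MeasurableSpace F] :
    Measurable (truncMeas (F := F)) := by
  apply Measure.measurable_of_measurable_coe
  intro s hs
  have heq : (fun P : Measure F => truncMeas P s) =
      fun P : Measure F => if P Set.univ = 1 then P s else 0 := by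
    funext P
    by_cases h : P Set.univ = 1 <;> simp [truncMeas, h]
  rw [heq]
  have hset : MeasurableSet {P : Measure F | P Set.univ = 1} :=
    (Measure.measurable_coe MeasurableSet.univ) (measurableSet_singleton 1)
  exact Measurable.ite hset (Measure.measurable_coe hs) measurable_const

/-- The per-task integrand of `stmt16`. -/
def gAux {F Z : Type*} [MeasurableSpace F] [MeasurableSpace Z] (D : Measure Z)
    (ℓ : F → Z → ℝ) {k : ℕ} (t : ℝ) (f : F) (s : Fin k → Z) : ℝ≥0∞ :=
  ENNReal.ofReal (Real.exp (t * ((∫ z, ℓ f z ∂D) - (k : ℝ)⁻¹ * ∑ j, ℓ f (s j))))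

lemma gAux_def {F Z : Type*} [MeasurableSpace F] [MeasurableSpace Z] (D : Measure Z)
    (ℓ : F → Z → ℝ) {k : ℕ} (t : ℝ) (f : F) (s : Fin k → Z) :
    gAux D ℓ t f s =
      ENNReal.ofReal (Real.exp (t * ((∫ z, ℓ f z ∂D) - (k : ℝ)⁻¹ * ∑ j, ℓ f (s j)))) := rfl

attribute [irreducible] gAux

lemma measurable_gAux {F Z : Type*} [MeasurableSpace F] [MeasurableSpace Z] (D : Measure Z)
    [SFinite D] {ℓ : F → Z → ℝ} (hℓ : Measurable (Function.uncurry ℓ)) {k : ℕ} (t : ℝ) :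
    Measurable fun q : F × (Fin k → Z) => gAux D ℓ t q.1 q.2 := by
  simp only [gAux_def]
  apply ENNReal.measurable_ofReal.comp
  apply Real.measurable_exp.comp
  apply Measurable.const_mul
  apply Measurable.sub
  · exact (hℓ.stronglyMeasurable.integral_prod_right').measurable.comp measurable_fst
  · apply Measurable.const_mul
    apply Finset.measurable_sum
    intro j _
    exact hℓ.comp (measurable_fst.prodMk ((measurable_pi_apply j).comp measurable_snd))

lemma gAux_pi_bound {F Z : Type*} [MeasurableSpace F] [MeasurableSpace Z] (D : Measure Z)
    [IsProbabilityMeasure D] {ℓ : F → Z → ℝ} (hℓ : Measurable (Function.uncurry ℓ))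
    (hℓ01 : ∀ f z, ℓ f z ∈ Set.Icc (0:ℝ) 1) {k : ℕ} (hk : 0 < k) (t : ℝ) (f : F) :
    ∫⁻ s, gAux D ℓ t f s ∂(Measure.pi fun _ : Fin k => D) ≤
      ENNReal.ofReal (Real.exp (t ^ 2 / (8 * k))) := by
  have hk0 : (k : ℝ) ≠ 0 := Nat.cast_ne_zero.2 hk.ne'
  have hhm : Measurable fun z => ℓ f z := hℓ.comp measurable_prodMk_left
  have hexpand : ∀ s : Fin k → Z,
      gAux D ℓ t f s = ∏ j : Fin k,
        ENNReal.ofReal (Real.exp ((t / k) * ((∫ z, ℓ f z ∂D) - ℓ f (s j)))) := by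
    intro s
    have h1 : t * ((∫ z, ℓ f z ∂D) - (k:ℝ)⁻¹ * ∑ j, ℓ f (s j)) =
        ∑ j : Fin k, (t / k) * ((∫ z, ℓ f z ∂D) - ℓ f (s j)) := by
      rw [← Finset.mul_sum, Finset.sum_sub_distrib, Finset.sum_const, Finset.card_univ,
        Fintype.card_fin, nsmul_eq_mul]
      field_simp
    simp only [gAux_def]
    rw [h1, Real.exp_sum, ENNReal.ofReal_prod_of_nonneg fun j _ => (Real.exp_pos _).le]
  have hzm : Measurable fun z =>
      ENNReal.ofReal (Real.exp ((t / k) * ((∫ z, ℓ f z ∂D) - ℓ f z))) :=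
    ENNReal.measurable_ofReal.comp (Real.measurable_exp.comp
      ((measurable_const.sub hhm).const_mul _))
  calc ∫⁻ s, gAux D ℓ t f s ∂(Measure.pi fun _ : Fin k => D)
      = ∏ _j : Fin k, ∫⁻ z,
          ENNReal.ofReal (Real.exp ((t / k) * ((∫ z', ℓ f z' ∂D) - ℓ f z))) ∂D := by
        rw [lintegral_congr hexpand]
        exact lintegral_pi_prod' k (fun _ => Z) (fun _ => inferInstance) (fun _ => D)
          (fun _ => inferInstance)
          (fun _ z => ENNReal.ofReal (Real.exp ((t / k) * ((∫ z', ℓ f z' ∂D) - ℓ f z))))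
          (fun _ => hzm)
    _ ≤ ∏ _j : Fin k, ENNReal.ofReal (Real.exp ((t / k) ^ 2 / 8)) :=
        Finset.prod_le_prod' fun j _ => single_sample_bound' D hhm (hℓ01 f) (t / k)
    _ = ENNReal.ofReal (Real.exp (t ^ 2 / (8 * k))) := by
        rw [Finset.prod_const, Finset.card_univ, Fintype.card_fin,
          ← ENNReal.ofReal_pow (Real.exp_pos _).le, ← Real.exp_nat_mul]
        congr 1
        field_simp

lemma task_bound' {F Z : Type*} [MeasurableSpace F] [MeasurableSpace Z] (D : Measure Z)
    [IsProbabilityMeasure D] {ℓ : F → Z → ℝ} (hℓ : Measurable (Function.uncurry ℓ))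
    (hℓ01 : ∀ f z, ℓ f z ∈ Set.Icc (0:ℝ) 1) {k : ℕ} (hk : 0 < k) (t : ℝ)
    (P : Measure F) [IsProbabilityMeasure P] :
    ∫⁻ s, ∫⁻ f, gAux D ℓ t f s ∂P ∂(Measure.pi fun _ : Fin k => D) ≤
      ENNReal.ofReal (Real.exp (t ^ 2 / (8 * k))) := by
  have hsw : AEMeasurable (Function.uncurry fun (s : Fin k → Z) (f : F) => gAux D ℓ t f s)
      ((Measure.pi fun _ : Fin k => D).prod P) :=
    ((measurable_gAux D hℓ t).comp (measurable_snd.prodMk measurable_fst)).aemeasurable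
  rw [lintegral_lintegral_swap hsw]
  calc ∫⁻ f, ∫⁻ s, gAux D ℓ t f s ∂(Measure.pi fun _ : Fin k => D) ∂P
      ≤ ∫⁻ _, ENNReal.ofReal (Real.exp (t ^ 2 / (8 * k))) ∂P :=
        lintegral_mono fun f => gAux_pi_bound D hℓ hℓ01 hk t f
    _ = _ := by rw [lintegral_const, measure_univ, mul_one]

end Stmt16Aux

set_option maxHeartbeats 2000000 in
theorem stmt16 {F : Type*} [MeasurableSpace F] {n : ℕ} (hn : 0 < n)
    {Z : Fin n → Type*} [∀ i, MeasurableSpace (Z i)]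
    (D : ∀ i, Measure (Z i)) [∀ i, IsProbabilityMeasure (D i)]
    (m : Fin n → ℕ) (hm : ∀ i, 0 < m i)
    (ℓ : ∀ i, F → Z i → ℝ)
    (hℓmeas : ∀ i, Measurable (Function.uncurry (ℓ i)))
    (hℓ01 : ∀ i f z, ℓ i f z ∈ Set.Icc (0 : ℝ) 1)
    (Pri : Measure (Measure F)) [IsProbabilityMeasure Pri]
    (hPri : ∀ᵐ P ∂Pri, IsProbabilityMeasure P)
    (lam : ℝ) (hlam : 0 < lam) :
    (∫⁻ S, (∫⁻ P, ∏ i, ∫⁻ f, ENNReal.ofReal (Real.exp ((lam / n) *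
          ((∫ z, ℓ i f z ∂(D i)) - (m i : ℝ)⁻¹ * ∑ j, ℓ i f (S i j)))) ∂P ∂Pri)
        ∂(Measure.pi fun i => Measure.pi fun _ : Fin (m i) => D i)) ≤
      ENNReal.ofReal (Real.exp (lam ^ 2 / (8 * n * ((n : ℝ) / ∑ i, (m i : ℝ)⁻¹)))) := by
  have hn0 : (n : ℝ) ≠ 0 := Nat.cast_ne_zero.2 hn.ne'
  have hfold : ∀ (i : Fin n) (f : F) (s : Fin (m i) → Z i),
      ENNReal.ofReal (Real.exp ((lam / n) *
        ((∫ z, ℓ i f z ∂(D i)) - (m i : ℝ)⁻¹ * ∑ j, ℓ i f (s j)))) =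
      gAux (D i) (ℓ i) (lam / n) f s := fun i f s => (gAux_def _ _ _ _ _).symm
  simp only [hfold]
  have hstep1 : ∀ S : ∀ i, Fin (m i) → Z i,
      (∫⁻ P, ∏ i, ∫⁻ f, gAux (D i) (ℓ i) (lam / n) f (S i) ∂P ∂Pri) =
      ∫⁻ P, ∏ i, ∫⁻ f, gAux (D i) (ℓ i) (lam / n) f (S i) ∂(truncMeas P) ∂Pri := by
    intro S
    refine lintegral_congr_ae (hPri.mono fun P hP => ?_)
    haveI := hP
    simp only [truncMeas_eq P]
  have hker : ∀ i : Fin n, Measurable fun q : (∀ i, Fin (m i) → Z i) × Measure F =>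
      ∫⁻ f, gAux (D i) (ℓ i) (lam / n) f (q.1 i) ∂(truncMeas q.2) := by
    intro i
    let κ : Kernel ((∀ i, Fin (m i) → Z i) × Measure F) F :=
      ⟨fun q => truncMeas q.2, measurable_truncMeas.comp measurable_snd⟩
    haveI : IsFiniteKernel κ := ⟨⟨1, ENNReal.one_lt_top, fun q => by
      have hκq : κ q = truncMeas q.2 := rfl
      rw [hκq, truncMeas]
      split_ifs with h
      · simp [h]
      · simp⟩⟩
    have hf : Measurable (Function.uncurry fun (q : (∀ i, Fin (m i) → Z i) × Measure F)
        (f : F) => gAux (D i) (ℓ i) (lam / n) f (q.1 i)) :=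
      (measurable_gAux (D i) (hℓmeas i) (lam / n)).comp
        (measurable_snd.prodMk ((measurable_pi_apply i).comp (measurable_fst.comp measurable_fst)))
    exact hf.lintegral_kernel_prod_right (κ := κ)
  have hjoint : Measurable (Function.uncurry fun (S : ∀ i, Fin (m i) → Z i) (P : Measure F) =>
      ∏ i, ∫⁻ f, gAux (D i) (ℓ i) (lam / n) f (S i) ∂(truncMeas P)) :=
    Finset.measurable_prod _ fun i _ => hker i
  calc (∫⁻ S, (∫⁻ P, ∏ i, ∫⁻ f, gAux (D i) (ℓ i) (lam / n) f (S i) ∂P ∂Pri)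
      ∂(Measure.pi fun i => Measure.pi fun _ : Fin (m i) => D i))
      = ∫⁻ S, (∫⁻ P, ∏ i, ∫⁻ f, gAux (D i) (ℓ i) (lam / n) f (S i) ∂(truncMeas P) ∂Pri)
          ∂(Measure.pi fun i => Measure.pi fun _ : Fin (m i) => D i) :=
        lintegral_congr hstep1
    _ = ∫⁻ P, (∫⁻ S, ∏ i, ∫⁻ f, gAux (D i) (ℓ i) (lam / n) f (S i) ∂(truncMeas P)
          ∂(Measure.pi fun i => Measure.pi fun _ : Fin (m i) => D i)) ∂Pri :=
        lintegral_lintegral_swap hjoint.aemeasurable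
    _ ≤ ∫⁻ _, ENNReal.ofReal (Real.exp ((lam / n) ^ 2 / 8 * ∑ i, ((m i : ℝ))⁻¹)) ∂Pri := by
        refine lintegral_mono_ae (hPri.mono fun P hP => ?_)
        haveI := hP
        simp only [truncMeas_eq P]
        have hhi : ∀ i, Measurable fun s : Fin (m i) → Z i =>
            ∫⁻ f, gAux (D i) (ℓ i) (lam / n) f s ∂P := fun i =>
          Measurable.lintegral_prod_right'
            ((measurable_gAux (D i) (hℓmeas i) (lam / n)).comp
              (measurable_snd.prodMk measurable_fst))
        calc ∫⁻ S, ∏ i, ∫⁻ f, gAux (D i) (ℓ i) (lam / n) f (S i) ∂P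
              ∂(Measure.pi fun i => Measure.pi fun _ : Fin (m i) => D i)
            = ∏ i, ∫⁻ s, ∫⁻ f, gAux (D i) (ℓ i) (lam / n) f s ∂P
                ∂(Measure.pi fun _ : Fin (m i) => D i) :=
              lintegral_pi_prod' n (fun i => Fin (m i) → Z i) (fun i => inferInstance)
                (fun i => Measure.pi fun _ : Fin (m i) => D i) (fun i => inferInstance)
                (fun i s => ∫⁻ f, gAux (D i) (ℓ i) (lam / n) f s ∂P) hhi
          _ ≤ ∏ i, ENNReal.ofReal (Real.exp ((lam / n) ^ 2 / (8 * m i))) :=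
              Finset.prod_le_prod' fun i _ =>
                task_bound' (D i) (hℓmeas i) (hℓ01 i) (hm i) _ P
          _ = ENNReal.ofReal (Real.exp ((lam / n) ^ 2 / 8 * ∑ i, ((m i : ℝ))⁻¹)) := by
              rw [← ENNReal.ofReal_prod_of_nonneg fun i _ => (Real.exp_pos _).le,
                ← Real.exp_sum]
              congr 1
              congr 1
              simp only [Finset.mul_sum]
              refine Finset.sum_congr rfl fun i _ => ?_
              rw [← div_div, div_eq_mul_inv]
    _ = ENNReal.ofReal (Real.exp ((lam / n) ^ 2 / 8 * ∑ i, ((m i : ℝ))⁻¹)) := by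
        rw [lintegral_const, measure_univ, mul_one]
    _ = ENNReal.ofReal (Real.exp (lam ^ 2 / (8 * n * ((n : ℝ) / ∑ i, (m i : ℝ)⁻¹)))) := by
        have hS : 0 < ∑ i, ((m i : ℝ))⁻¹ := by
          refine Finset.sum_pos (fun i _ => ?_) ⟨⟨0, hn⟩, Finset.mem_univ _⟩
          have : (0:ℝ) < m i := by exact_mod_cast hm i
          positivity
        have hS0 : (∑ i, ((m i : ℝ))⁻¹) ≠ 0 := hS.ne'
        congr 2
        field_simp


end
end

section
/- Convex stochastic domination by the binomial (Berend–Kontorovich): Let X_1,…,X_t be independent random variables with P(0 ≤ X_i ≤ 1) = 1, let X = Σ_{i=1}^t X_i and μ = E[X], and let Y be a binomial random variable with distribution Y ∼ B(t, μ/t). Then for every convex function f : ℝ → ℝ, E[f(X)] ≤ E[f(Y)]. -/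
open MeasureTheory ProbabilityTheory
open scoped ENNReal NNReal Classical

noncomputable section

namespace BKaux

open Finset

variable {ι : Type*} [DecidableEq ι]

/-- weight of a subset -/
def W (s : Finset ι) (x : ι → ℝ) (S : Finset ι) : ℝ :=
  (∏ i ∈ S, x i) * ∏ i ∈ s \ S, (1 - x i)

def G (s : Finset ι) (x : ι → ℝ) (F : ℕ → ℝ) : ℝ :=
  ∑ S ∈ s.powerset, W s x S * F S.card

lemma W_nonneg {s : Finset ι} {x : ι → ℝ} (hx : ∀ i ∈ s, x i ∈ Set.Icc (0:ℝ) 1)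
    {S : Finset ι} (hS : S ∈ s.powerset) : 0 ≤ W s x S := by
  rw [mem_powerset] at hS
  apply mul_nonneg
  · exact prod_nonneg fun i hi => (hx i (hS hi)).1
  · exact prod_nonneg fun i hi => by
      have := (hx i (mem_sdiff.1 hi).1).2; linarith

lemma W_sum (s : Finset ι) (x : ι → ℝ) : ∑ S ∈ s.powerset, W s x S = 1 := by
  have h := Finset.prod_add x (fun i => 1 - x i) s
  simp only [add_sub_cancel, prod_const_one] at h
  simp only [W]
  exact h.symm

lemma G_const (s : Finset ι) (x : ι → ℝ) (c : ℝ) : G s x (fun _ => c) = c := by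
  simp only [G, ← Finset.sum_mul, W_sum, one_mul]

lemma G_add (s : Finset ι) (x : ι → ℝ) (F F' : ℕ → ℝ) :
    G s x (fun k => F k + F' k) = G s x F + G s x F' := by
  simp only [G, mul_add, Finset.sum_add_distrib]

lemma G_add_const (s : Finset ι) (x : ι → ℝ) (F : ℕ → ℝ) (c : ℝ) :
    G s x (fun k => F k + c) = G s x F + c := by
  rw [G_add, G_const]

lemma G_congr {s : Finset ι} {x y : ι → ℝ} (h : ∀ i ∈ s, x i = y i) (F : ℕ → ℝ) :
    G s x F = G s y F := by
  refine Finset.sum_congr rfl fun S hS => ?_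
  rw [mem_powerset] at hS
  have h1 : ∏ i ∈ S, x i = ∏ i ∈ S, y i :=
    Finset.prod_congr rfl fun i hi => h i (hS hi)
  have h2 : ∏ i ∈ s \ S, (1 - x i) = ∏ i ∈ s \ S, (1 - y i) :=
    Finset.prod_congr rfl fun i hi => by rw [h i (mem_sdiff.1 hi).1]
  simp only [W, h1, h2]

lemma G_nonneg {s : Finset ι} {x : ι → ℝ} (hx : ∀ i ∈ s, x i ∈ Set.Icc (0:ℝ) 1)
    {F : ℕ → ℝ} (hF : ∀ k, 0 ≤ F k) : 0 ≤ G s x F :=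
  Finset.sum_nonneg fun S hS => mul_nonneg (W_nonneg hx hS) (hF _)

lemma G_insert {a : ι} {s : Finset ι} (ha : a ∉ s) (x : ι → ℝ) (F : ℕ → ℝ) :
    G (insert a s) x F = (1 - x a) * G s x F + x a * G s x (fun k => F (k + 1)) := by
  rw [G, Finset.sum_powerset_insert ha, G, G, Finset.mul_sum, Finset.mul_sum]
  congr 1
  · refine Finset.sum_congr rfl fun S hS => ?_
    rw [mem_powerset] at hS
    have haS : a ∉ S := fun h => ha (hS h)
    have h1 : insert a s \ S = insert a (s \ S) := by
      rw [Finset.insert_sdiff_of_notMem _ haS]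
    rw [W, W, h1, Finset.prod_insert (by simp [ha])]
    ring
  · refine Finset.sum_congr rfl fun S hS => ?_
    rw [mem_powerset] at hS
    have haS : a ∉ S := fun h => ha (hS h)
    have h1 : insert a s \ insert a S = s \ S := by
      ext k
      simp only [mem_sdiff, mem_insert]
      constructor
      · rintro ⟨h1 | h1, h2⟩
        · exact absurd (Or.inl h1) h2
        · exact ⟨h1, fun hk => h2 (Or.inr hk)⟩
      · rintro ⟨h1, h2⟩
        exact ⟨Or.inr h1, by rintro (rfl | hk); exacts [ha h1, h2 hk]⟩
    rw [W, W, h1, Finset.prod_insert haS, Finset.card_insert_of_notMem haS]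
    ring

lemma G_cast (s : Finset ι) (x : ι → ℝ) : G s x (fun k => (k : ℝ)) = ∑ i ∈ s, x i := by
  classical
  induction s using Finset.induction_on with
  | empty => simp [G, W]
  | @insert a s ha ih =>
    rw [G_insert ha, Finset.sum_insert ha]
    have : G s x (fun k => ((k + 1 : ℕ) : ℝ)) = G s x (fun k => (k : ℝ)) + 1 := by
      push_cast
      exact G_add_const s x _ 1
    rw [this, ih]
    ring

lemma G_jensen {f : ℝ → ℝ} (hf : ConvexOn ℝ Set.univ f) {s : Finset ι} {x : ι → ℝ}
    (hx : ∀ i ∈ s, x i ∈ Set.Icc (0:ℝ) 1) :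
    f (∑ i ∈ s, x i) ≤ G s x (fun k => f k) := by
  have h := hf.map_sum_le (t := s.powerset) (w := W s x) (p := fun S => (S.card : ℝ))
    (fun S hS => W_nonneg hx hS) (W_sum s x) (fun S _ => Set.mem_univ _)
  have h2 : ∑ S ∈ s.powerset, W s x S • ((S.card : ℝ)) = ∑ i ∈ s, x i := by
    rw [← G_cast s x]; rfl
  rw [h2] at h
  exact h.trans_eq (by rfl)


lemma G_sub (s : Finset ι) (x : ι → ℝ) (F F' : ℕ → ℝ) :
    G s x (fun k => F k - F' k) = G s x F - G s x F' := by
  simp only [G, mul_sub, Finset.sum_sub_distrib]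

lemma G_second_diff (s : Finset ι) (x : ι → ℝ) (F : ℕ → ℝ) :
    G s x (fun k => F k - 2 * F (k + 1) + F (k + 1 + 1)) =
      G s x F - 2 * G s x (fun k => F (k + 1)) + G s x (fun k => F (k + 1 + 1)) := by
  simp only [G, Finset.mul_sum, ← Finset.sum_sub_distrib, ← Finset.sum_add_distrib]
  exact Finset.sum_congr rfl fun S _ => by ring

lemma G_pair_le {s : Finset ι} {i j : ι} (hi : i ∈ s) (hj : j ∈ s) (hij : i ≠ j)
    {x : ι → ℝ} (hx : ∀ k ∈ s, x k ∈ Set.Icc (0:ℝ) 1) {a b : ℝ}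
    (hab : a + b = x i + x j) (hprod : x i * x j ≤ a * b)
    {F : ℕ → ℝ} (hF : ∀ k, 0 ≤ F k - 2 * F (k + 1) + F (k + 2)) :
    G s x F ≤ G s (Function.update (Function.update x i a) j b) F := by
  set s' := (s.erase i).erase j with hs'
  have hjs' : j ∉ s' := Finset.notMem_erase j _
  have his' : i ∉ s' := fun h => Finset.notMem_erase i _ (Finset.mem_of_mem_erase h)
  have hii : i ∉ insert j s' := by
    simp only [Finset.mem_insert]
    rintro (h | h); exacts [hij h, his' h]
  have hseq : insert i (insert j s') = s := by
    rw [hs', Finset.insert_erase (Finset.mem_erase.2 ⟨hij.symm, hj⟩), Finset.insert_erase hi]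
  set y := Function.update (Function.update x i a) j b with hy
  have hyi : y i = a := by
    rw [hy, Function.update_of_ne hij, Function.update_self]
  have hyj : y j = b := by rw [hy, Function.update_self]
  have hyk : ∀ k ∈ s', y k = x k := by
    intro k hk
    have hki : k ≠ i := fun h => his' (h ▸ hk)
    have hkj : k ≠ j := fun h => hjs' (h ▸ hk)
    rw [hy, Function.update_of_ne hkj, Function.update_of_ne hki]
  set A := G s' x F with hA
  set B := G s' x (fun k => F (k + 1)) with hB
  set C := G s' x (fun k => F (k + 1 + 1)) with hC
  have hxG : G s x F = (1 - x i) * ((1 - x j) * A + x j * B)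
      + x i * ((1 - x j) * B + x j * C) := by
    rw [← hseq, G_insert hii, G_insert hjs', G_insert hjs']
  have hyG : G s y F = (1 - a) * ((1 - b) * A + b * B)
      + a * ((1 - b) * B + b * C) := by
    rw [← hseq, G_insert hii, G_insert hjs', G_insert hjs', hyi, hyj,
      G_congr hyk F, G_congr hyk (fun k => F (k + 1)), G_congr hyk (fun k => F (k + 1 + 1))]
  have hD : 0 ≤ A - 2 * B + C := by
    rw [← G_second_diff]
    refine G_nonneg (fun k hk => hx k ?_) (fun k => hF k)
    · rw [← hseq]
      exact Finset.mem_insert_of_mem (Finset.mem_insert_of_mem hk)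
  have key : 0 ≤ (a * b - x i * x j) * (A - 2 * B + C) :=
    mul_nonneg (by linarith) hD
  obtain rfl : b = x i + x j - a := by linarith
  have expand : (1 - a) * ((1 - (x i + x j - a)) * A + (x i + x j - a) * B)
        + a * ((1 - (x i + x j - a)) * B + (x i + x j - a) * C)
      - ((1 - x i) * ((1 - x j) * A + x j * B) + x i * ((1 - x j) * B + x j * C))
      = (a * (x i + x j - a) - x i * x j) * (A - 2 * B + C) := by ring
  rw [hxG, hyG]
  nlinarith [key, expand]

lemma G_le_const {t : ℕ} {m : ℝ} (hm : m ∈ Set.Icc (0:ℝ) 1) (F : ℕ → ℝ)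
    (hF : ∀ k, 0 ≤ F k - 2 * F (k + 1) + F (k + 2)) :
    ∀ (n : ℕ) (p : Fin t → ℝ), (∀ i, p i ∈ Set.Icc (0:ℝ) 1) → (∑ i, p i = t * m) →
      ((Finset.univ.filter (fun i => p i ≠ m)).card = n) →
      G (Finset.univ : Finset (Fin t)) p F ≤ G (Finset.univ : Finset (Fin t)) (fun _ => m) F := by
  intro n
  induction n using Nat.strong_induction_on with
  | _ n ih =>
    intro p hp hsum hcard
    by_cases hall : ∀ i, p i = m
    · exact le_of_eq (G_congr (fun i _ => hall i) F)
    push_neg at hall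
    obtain ⟨i0, hi0⟩ := hall
    have hconst : ∑ _i : Fin t, m = t * m := by
      rw [Finset.sum_const, Finset.card_univ, Fintype.card_fin, nsmul_eq_mul]
    have hex1 : ∃ i, m < p i := by
      by_contra h; push_neg at h
      have hlt : ∑ i, p i < ∑ _i : Fin t, m :=
        Finset.sum_lt_sum (fun i _ => h i) ⟨i0, Finset.mem_univ _, lt_of_le_of_ne (h i0) hi0⟩
      rw [hconst] at hlt; linarith
    have hex2 : ∃ j, p j < m := by
      by_contra h; push_neg at h
      have hlt : ∑ _i : Fin t, m < ∑ i, p i :=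
        Finset.sum_lt_sum (fun i _ => h i) ⟨i0, Finset.mem_univ _, lt_of_le_of_ne (h i0) (Ne.symm hi0)⟩
      rw [hconst] at hlt; linarith
    obtain ⟨i, hi⟩ := hex1
    obtain ⟨j, hj⟩ := hex2
    have hij : i ≠ j := fun h => by rw [h] at hi; linarith
    set q := Function.update (Function.update p i m) j (p i + p j - m) with hqdef
    have hq_i : q i = m := by
      rw [hqdef, Function.update_of_ne hij, Function.update_self]
    have hq_j : q j = p i + p j - m := by rw [hqdef, Function.update_self]
    have hq_k : ∀ k, k ≠ i → k ≠ j → q k = p k := by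
      intro k hki hkj
      rw [hqdef, Function.update_of_ne hkj, Function.update_of_ne hki]
    have step : G Finset.univ p F ≤ G Finset.univ q F := by
      refine G_pair_le (Finset.mem_univ i) (Finset.mem_univ j) hij
        (fun k _ => hp k) (a := m) (b := p i + p j - m) (by ring) ?_ hF
      nlinarith [hi, hj]
    have hq_mem : ∀ k, q k ∈ Set.Icc (0:ℝ) 1 := by
      intro k
      by_cases hki : k = i
      · rw [hki, hq_i]; exact hm
      by_cases hkj : k = j
      · rw [hkj, hq_j]
        constructor
        · have := (hp j).1; linarith [(hp i).2, (hp j).1]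
        · linarith [(hp i).2, (hp j).1]
      · rw [hq_k k hki hkj]; exact hp k
    have hq_sum : ∑ k, q k = t * m := by
      have e1 := Finset.sum_erase_add Finset.univ q (Finset.mem_univ j)
      have e2 := Finset.sum_erase_add Finset.univ p (Finset.mem_univ j)
      have hi' : i ∈ Finset.univ.erase j := Finset.mem_erase.2 ⟨hij, Finset.mem_univ i⟩
      have e3 := Finset.sum_erase_add (Finset.univ.erase j) q hi'
      have e4 := Finset.sum_erase_add (Finset.univ.erase j) p hi'
      have e5 : ∑ k ∈ (Finset.univ.erase j).erase i, q k
          = ∑ k ∈ (Finset.univ.erase j).erase i, p k := by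
        refine Finset.sum_congr rfl fun k hk => ?_
        have hk1 : k ≠ i := (Finset.mem_erase.1 hk).1
        have hk2 : k ≠ j := (Finset.mem_erase.1 (Finset.mem_of_mem_erase hk)).1
        exact hq_k k hk1 hk2
      rw [hq_i] at e3
      rw [hq_j] at e1
      rw [e5] at e3
      linarith [hsum]
    have hsubset : Finset.univ.filter (fun k => q k ≠ m)
        ⊆ (Finset.univ.filter (fun k => p k ≠ m)).erase i := by
      intro k hk
      rw [Finset.mem_filter] at hk
      have hki : k ≠ i := by
        intro h; exact hk.2 (h ▸ hq_i)
      refine Finset.mem_erase.2 ⟨hki, Finset.mem_filter.2 ⟨Finset.mem_univ k, ?_⟩⟩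
      by_cases hkj : k = j
      · rw [hkj]; exact ne_of_lt hj
      · rw [← hq_k k hki hkj]; exact hk.2
    have hcard_lt : (Finset.univ.filter (fun k => q k ≠ m)).card < n := by
      calc (Finset.univ.filter (fun k => q k ≠ m)).card
          ≤ ((Finset.univ.filter (fun k => p k ≠ m)).erase i).card :=
            Finset.card_le_card hsubset
        _ < (Finset.univ.filter (fun k => p k ≠ m)).card :=
            Finset.card_erase_lt_of_mem
              (Finset.mem_filter.2 ⟨Finset.mem_univ i, ne_of_gt hi⟩)
        _ = n := hcard
    exact step.trans (ih _ hcard_lt q hq_mem hq_sum rfl)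

lemma G_le_avg {t : ℕ} (ht : 0 < t) (p : Fin t → ℝ) (hp : ∀ i, p i ∈ Set.Icc (0:ℝ) 1)
    (F : ℕ → ℝ) (hF : ∀ k, 0 ≤ F k - 2 * F (k + 1) + F (k + 2)) :
    G (Finset.univ : Finset (Fin t)) p F
      ≤ G (Finset.univ : Finset (Fin t)) (fun _ => (∑ i, p i) / t) F := by
  have htR : (0:ℝ) < t := Nat.cast_pos.2 ht
  have h0 : (0:ℝ) ≤ ∑ i, p i := Finset.sum_nonneg fun i _ => (hp i).1
  have h1 : ∑ i, p i ≤ t := by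
    calc ∑ i, p i ≤ ∑ _i : Fin t, (1:ℝ) := Finset.sum_le_sum fun i _ => (hp i).2
      _ = t := by rw [Finset.sum_const, Finset.card_univ, Fintype.card_fin, nsmul_eq_mul, mul_one]
  have hm : (∑ i, p i) / t ∈ Set.Icc (0:ℝ) 1 :=
    ⟨div_nonneg h0 htR.le, (div_le_one htR).2 h1⟩
  exact G_le_const hm F hF _ p hp (by field_simp) rfl

lemma G_binom {t : ℕ} (m : ℝ) (F : ℕ → ℝ) :
    G (Finset.univ : Finset (Fin t)) (fun _ => m) F
      = ∑ k ∈ Finset.range (t + 1), (t.choose k : ℝ) * m ^ k * (1 - m) ^ (t - k) * F k := by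
  have h : ∀ S ∈ (Finset.univ : Finset (Fin t)).powerset,
      W Finset.univ (fun _ => m) S * F S.card
        = m ^ S.card * (1 - m) ^ (t - S.card) * F S.card := by
    intro S hS
    rw [W, Finset.prod_const, Finset.prod_const,
      Finset.card_sdiff_of_subset (Finset.mem_powerset.1 hS), Finset.card_univ, Fintype.card_fin]

  rw [G, Finset.sum_congr rfl h]
  have h2 := Finset.sum_powerset_apply_card
    (f := fun k => m ^ k * (1 - m) ^ (t - k) * F k) (x := (Finset.univ : Finset (Fin t)))
  rw [h2, Finset.card_univ, Fintype.card_fin]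
  exact Finset.sum_congr rfl fun k _ => by rw [nsmul_eq_mul]; ring

section MT


variable {Ω : Type*} [MeasurableSpace Ω] {μ : Measure Ω} [IsProbabilityMeasure μ] {t : ℕ}

lemma integrable_prod_bdd (X : Fin t → Ω → ℝ) (hX : ∀ i, Measurable (X i))
    (g : Fin t → ℝ → ℝ) (hg : ∀ i, Measurable (g i))
    (hb : ∀ i, ∀ᵐ ω ∂μ, ‖g i (X i ω)‖ ≤ 1) (s : Finset (Fin t)) :
    Integrable (fun ω => ∏ i ∈ s, g i (X i ω)) μ := by
  refine (integrable_const (1:ℝ)).mono' ?_ ?_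
  · exact (Finset.measurable_prod s fun i _ => (hg i).comp (hX i)).aestronglyMeasurable
  · have hball : ∀ᵐ ω ∂μ, ∀ i ∈ s, ‖g i (X i ω)‖ ≤ 1 :=
      (MeasureTheory.ae_ball_iff s.countable_toSet).2 fun i _ => hb i
    filter_upwards [hball] with ω hω
    calc ‖∏ i ∈ s, g i (X i ω)‖ = ∏ i ∈ s, ‖g i (X i ω)‖ := by
          simp [Real.norm_eq_abs, Finset.abs_prod]
      _ ≤ 1 := Finset.prod_le_one (fun i _ => norm_nonneg _) (fun i hi => hω i hi)

lemma integral_prod_eq (X : Fin t → Ω → ℝ) (hX : ∀ i, Measurable (X i))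
    (hindep : iIndepFun X μ)
    (g : Fin t → ℝ → ℝ) (hg : ∀ i, Measurable (g i))
    (hb : ∀ i, ∀ᵐ ω ∂μ, ‖g i (X i ω)‖ ≤ 1) (s : Finset (Fin t)) :
    ∫ ω, ∏ i ∈ s, g i (X i ω) ∂μ = ∏ i ∈ s, ∫ ω, g i (X i ω) ∂μ := by
  classical
  have hcomp : iIndepFun (fun i => g i ∘ X i) μ :=
    hindep.comp g hg
  have hmeas : ∀ i, Measurable (g i ∘ X i) := fun i => (hg i).comp (hX i)
  have hint : ∀ i, Integrable (fun ω => g i (X i ω)) μ := fun i =>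
    (integrable_const (1:ℝ)).mono' (hmeas i).aestronglyMeasurable (hb i)
  induction s using Finset.induction_on with
  | empty => simp
  | @insert a s ha ih =>
    have hIndep2 : IndepFun (∏ j ∈ s, (fun ω => g j (X j ω))) (fun ω => g a (X a ω)) μ :=
      hcomp.indepFun_finsetProd_of_notMem hmeas ha
    have hprodfn : (∏ j ∈ s, (fun ω => g j (X j ω))) = fun ω => ∏ j ∈ s, g j (X j ω) := by
      funext ω; rw [Finset.prod_apply]
    rw [hprodfn] at hIndep2
    have hprodint : Integrable (fun ω => ∏ i ∈ s, g i (X i ω)) μ :=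
      integrable_prod_bdd X hX g hg hb s
    have hmul := hIndep2.integral_mul_eq_mul_integral hprodint.aestronglyMeasurable (hint a).aestronglyMeasurable
    simp only [Finset.prod_insert ha]
    have : (fun ω => g a (X a ω) * ∏ i ∈ s, g i (X i ω))
        = (fun ω => ∏ i ∈ s, g i (X i ω)) * (fun ω => g a (X a ω)) := by
      funext ω; simp [mul_comm]
    rw [show (∫ ω, g a (X a ω) * ∏ i ∈ s, g i (X i ω) ∂μ)
        = ∫ ω, ((fun ω => ∏ i ∈ s, g i (X i ω)) * fun ω => g a (X a ω)) ω ∂μ by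
      refine integral_congr_ae (Filter.Eventually.of_forall fun ω => ?_)
      simp [mul_comm]]
    rw [hmul, ih]
    ring

lemma integral_binomR {t : ℕ} {m : ℝ} (hm : m ∈ Set.Icc (0:ℝ) 1) {f : ℝ → ℝ}
    (hfc : Continuous f) :
    ∫ y, f y ∂(binomR t m)
      = ∑ k ∈ Finset.range (t + 1), (t.choose k : ℝ) * m ^ k * (1 - m) ^ (t - k) * f k := by
  have hdint : ∀ x : ℝ, Integrable f (Measure.dirac x) := by
    intro x
    refine ⟨hfc.aestronglyMeasurable, ?_⟩
    simp [HasFiniteIntegral, lintegral_dirac]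
  have hcoef : ∀ k, (0:ℝ) ≤ (t.choose k) * m ^ k * (1 - m) ^ (t - k) := by
    intro k
    have h1 : (0:ℝ) ≤ m := hm.1
    have h2 : (0:ℝ) ≤ 1 - m := by linarith [hm.2]
    positivity
  rw [binomR, integral_finset_sum_measure]
  · refine Finset.sum_congr rfl fun k _ => ?_
    rw [integral_smul_measure, integral_dirac, ENNReal.toReal_ofReal (hcoef k), smul_eq_mul]
  · intro k _
    exact (hdint _).smul_measure ENNReal.ofReal_ne_top

end MT

end BKaux

theorem stmt17 {Ω : Type*} [MeasurableSpace Ω] (μP : Measure Ω) [IsProbabilityMeasure μP]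
    {t : ℕ} (ht : 0 < t) (X : Fin t → Ω → ℝ) (hXmeas : ∀ i, Measurable (X i))
    (hindep : iIndepFun X μP)
    (hbdd : ∀ i, ∀ᵐ ω ∂μP, X i ω ∈ Set.Icc (0 : ℝ) 1)
    (f : ℝ → ℝ) (hf : ConvexOn ℝ Set.univ f) :
    (∫ ω, f (∑ i, X i ω) ∂μP) ≤
      ∫ y, f y ∂(binomR t ((∫ ω, (∑ i, X i ω) ∂μP) / t)) := by
  classical
  have hfc : Continuous f := hf.locallyLipschitz.continuous
  set F : ℕ → ℝ := fun k => f k with hFdef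
  -- second differences of F are nonneg
  have hF : ∀ k, 0 ≤ F k - 2 * F (k + 1) + F (k + 2) := by
    intro k
    have h2 := hf.2 (Set.mem_univ ((k : ℝ))) (Set.mem_univ ((k : ℝ) + 2))
      (by norm_num : (0:ℝ) ≤ 1/2) (by norm_num : (0:ℝ) ≤ 1/2) (by norm_num : (1/2 : ℝ) + 1/2 = 1)
    simp only [smul_eq_mul] at h2
    have e1 : (1/2 : ℝ) * (k : ℝ) + (1/2) * ((k : ℝ) + 2) = ((k + 1 : ℕ) : ℝ) := by
      push_cast; ring
    rw [e1] at h2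
    have e2 : ((k + 2 : ℕ) : ℝ) = (k : ℝ) + 2 := by push_cast; ring
    simp only [hFdef]
    rw [e2]
    linarith
  -- basic integrability
  have hXint : ∀ i, Integrable (X i) μP := by
    intro i
    refine (integrable_const (1:ℝ)).mono' (hXmeas i).aestronglyMeasurable ?_
    filter_upwards [hbdd i] with ω hω
    rw [Real.norm_eq_abs, abs_le]
    exact ⟨by linarith [hω.1], hω.2⟩
  set p : Fin t → ℝ := fun i => ∫ ω, X i ω ∂μP with hpdef
  have hp_mem : ∀ i, p i ∈ Set.Icc (0:ℝ) 1 := by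
    intro i
    constructor
    · exact integral_nonneg_of_ae ((hbdd i).mono fun ω hω => hω.1)
    · have := integral_mono_ae (hXint i) (integrable_const 1) ((hbdd i).mono fun ω hω => hω.2)
      simpa using this
  have hmean : ∫ ω, (∑ i, X i ω) ∂μP = ∑ i, p i :=
    integral_finset_sum _ fun i _ => hXint i
  have hbdd_all : ∀ᵐ ω ∂μP, ∀ i, X i ω ∈ Set.Icc (0:ℝ) 1 := ae_all_iff.2 hbdd
  have hsum_meas : Measurable (fun ω => ∑ i, X i ω) :=
    Finset.measurable_sum _ fun i _ => hXmeas i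
  -- pointwise Jensen step
  have step1 : ∀ᵐ ω ∂μP, f (∑ i, X i ω) ≤ BKaux.G Finset.univ (fun i => X i ω) F := by
    filter_upwards [hbdd_all] with ω hω
    exact BKaux.G_jensen hf fun i _ => hω i
  -- integrability of the LHS
  obtain ⟨Cf, hCf⟩ := (isCompact_Icc (a := (0:ℝ)) (b := (t : ℝ))).exists_bound_of_continuousOn
    hfc.continuousOn
  have hLint : Integrable (fun ω => f (∑ i, X i ω)) μP := by
    refine (integrable_const Cf).mono' (hfc.measurable.comp hsum_meas).aestronglyMeasurable ?_
    filter_upwards [hbdd_all] with ω hω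
    refine hCf _ ⟨Finset.sum_nonneg fun i _ => (hω i).1, ?_⟩
    calc ∑ i, X i ω ≤ ∑ _i : Fin t, (1:ℝ) := Finset.sum_le_sum fun i _ => (hω i).2
      _ = t := by simp
  -- the per-subset factor functions
  set g : Finset (Fin t) → Fin t → ℝ → ℝ :=
    fun S i x => if i ∈ S then x else 1 - x with hgdef
  have hgmeas : ∀ S i, Measurable (g S i) := by
    intro S i
    by_cases h : i ∈ S <;> simp only [hgdef, h, if_true, if_false]
    · exact measurable_id
    · exact measurable_const.sub measurable_id
  have hgb : ∀ S i, ∀ᵐ ω ∂μP, ‖g S i (X i ω)‖ ≤ 1 := by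
    intro S i
    filter_upwards [hbdd i] with ω hω
    by_cases h : i ∈ S <;> simp only [hgdef, h, if_true, if_false] <;>
      rw [Real.norm_eq_abs, abs_le] <;> constructor <;> linarith [hω.1, hω.2]
  have hWg : ∀ (S : Finset (Fin t)) (x : Fin t → ℝ),
      BKaux.W Finset.univ x S = ∏ i, g S i (x i) := by
    intro S x
    rw [BKaux.W, ← Finset.prod_sdiff (Finset.subset_univ S), mul_comm]
    congr 1
    · exact (Finset.prod_congr rfl fun i hi => by
        simp [hgdef, (Finset.mem_sdiff.1 hi).2]).symm
    · exact (Finset.prod_congr rfl fun i hi => by simp [hgdef, hi]).symm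
  have hWint : ∀ S : Finset (Fin t),
      Integrable (fun ω => BKaux.W Finset.univ (fun i => X i ω) S) μP := by
    intro S
    have := BKaux.integrable_prod_bdd X hXmeas (g S) (hgmeas S) (hgb S) Finset.univ
    refine this.congr (Filter.Eventually.of_forall fun ω => ?_)
    exact (hWg S fun i => X i ω).symm
  have hWval : ∀ S : Finset (Fin t),
      ∫ ω, BKaux.W Finset.univ (fun i => X i ω) S ∂μP = BKaux.W Finset.univ p S := by
    intro S
    have e1 : ∫ ω, BKaux.W Finset.univ (fun i => X i ω) S ∂μP
        = ∫ ω, ∏ i, g S i (X i ω) ∂μP := by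
      refine integral_congr_ae (Filter.Eventually.of_forall fun ω => ?_)
      exact hWg S fun i => X i ω
    rw [e1, BKaux.integral_prod_eq X hXmeas hindep (g S) (hgmeas S) (hgb S) Finset.univ,
      hWg S p]
    refine Finset.prod_congr rfl fun i _ => ?_
    by_cases h : i ∈ S
    · simp [hgdef, h, hpdef]
    · simp only [hgdef, h, if_false]
      rw [integral_sub (integrable_const 1) (hXint i)]
      simp [hpdef]
  -- integrability of the G functional
  have hGint : Integrable (fun ω => BKaux.G Finset.univ (fun i => X i ω) F) μP := by
    simp only [BKaux.G]
    exact integrable_finset_sum _ fun S _ => (hWint S).mul_const _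
  -- expectation of G
  have hGval : ∫ ω, BKaux.G Finset.univ (fun i => X i ω) F ∂μP
      = BKaux.G Finset.univ p F := by
    simp only [BKaux.G]
    rw [integral_finset_sum _ fun S _ => (hWint S).mul_const _]
    exact Finset.sum_congr rfl fun S _ => by rw [integral_mul_const, hWval S]
  -- mean in Icc
  have hmean_mem : (∑ i, p i) / t ∈ Set.Icc (0:ℝ) 1 := by
    have htR : (0:ℝ) < t := Nat.cast_pos.2 ht
    constructor
    · exact div_nonneg (Finset.sum_nonneg fun i _ => (hp_mem i).1) htR.le
    · rw [div_le_one htR]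
      calc ∑ i, p i ≤ ∑ _i : Fin t, (1:ℝ) := Finset.sum_le_sum fun i _ => (hp_mem i).2
        _ = t := by simp
  calc ∫ ω, f (∑ i, X i ω) ∂μP
      ≤ ∫ ω, BKaux.G Finset.univ (fun i => X i ω) F ∂μP :=
        integral_mono_ae hLint hGint step1
    _ = BKaux.G Finset.univ p F := hGval
    _ ≤ BKaux.G Finset.univ (fun _ => (∑ i, p i) / t) F :=
        BKaux.G_le_avg ht p hp_mem F hF
    _ = ∑ k ∈ Finset.range (t + 1),
          (t.choose k : ℝ) * ((∑ i, p i) / t) ^ k * (1 - (∑ i, p i) / t) ^ (t - k) * F k :=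
        BKaux.G_binom _ F
    _ = ∫ y, f y ∂(binomR t ((∫ ω, (∑ i, X i ω) ∂μP) / t)) := by
        rw [hmean, BKaux.integral_binomR hmean_mem hfc]


end
end

section
/- Maurer's binomial kl moment bound: Let 0 ≤ μ ≤ t and let Y be a binomial random variable with distribution Y ∼ B(t, μ/t). Then E[ exp( t · kl( Y/t | μ/t ) ) ] ≤ 2 √t. -/
open MeasureTheory ProbabilityTheory
open scoped ENNReal NNReal Classical

noncomputable section

namespace MaurerAux
open Real Finset

lemma sqrt_pi_le_stirling (n : ℕ) : Real.sqrt π ≤ Stirling.stirlingSeq (n + 1) :=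
  Stirling.stirlingSeq'_antitone.le_of_tendsto
    (Stirling.tendsto_stirlingSeq_sqrt_pi.comp (Filter.tendsto_add_atTop_nat 1)) n

lemma stirling_le_e_div_sqrt_two (n : ℕ) :
    Stirling.stirlingSeq (n + 1) ≤ Real.exp 1 / Real.sqrt 2 := by
  have := Stirling.stirlingSeq'_antitone (Nat.zero_le n)
  simpa [Stirling.stirlingSeq_one] using this

lemma factorial_lower (n : ℕ) (hn : 1 ≤ n) :
    Real.sqrt (2 * π * n) * ((n : ℝ) / Real.exp 1) ^ n ≤ (Nat.factorial n : ℝ) := by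
  obtain ⟨m, rfl⟩ : ∃ m, n = m + 1 := ⟨n - 1, by omega⟩
  have h := sqrt_pi_le_stirling m
  rw [Stirling.stirlingSeq] at h
  have hpos : (0:ℝ) < Real.sqrt (2 * ((m+1:ℕ):ℝ)) * (((m+1:ℕ):ℝ) / Real.exp 1) ^ (m+1) := by
    positivity
  rw [le_div_iff₀ hpos] at h
  calc Real.sqrt (2 * π * ((m+1:ℕ):ℝ)) * (((m+1:ℕ):ℝ) / Real.exp 1) ^ (m+1)
      = Real.sqrt π * (Real.sqrt (2 * ((m+1:ℕ):ℝ)) * (((m+1:ℕ):ℝ) / Real.exp 1) ^ (m+1)) := by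
        rw [show 2 * π * ((m+1:ℕ):ℝ) = π * (2 * ((m+1:ℕ):ℝ)) by ring, Real.sqrt_mul pi_pos.le]
        ring
    _ ≤ (Nat.factorial (m+1) : ℝ) := h

lemma factorial_upper (n : ℕ) (hn : 1 ≤ n) :
    ((Nat.factorial n) : ℝ) ≤ Real.exp 1 * Real.sqrt n * ((n : ℝ) / Real.exp 1) ^ n := by
  obtain ⟨m, rfl⟩ : ∃ m, n = m + 1 := ⟨n - 1, by omega⟩
  have h := stirling_le_e_div_sqrt_two m
  rw [Stirling.stirlingSeq, div_le_div_iff₀ (by positivity) (by positivity)] at h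
  have h2 : Real.sqrt 2 ≠ 0 := by positivity
  have hs : Real.sqrt (2 * ((m+1:ℕ):ℝ)) = Real.sqrt 2 * Real.sqrt ((m+1:ℕ):ℝ) :=
    Real.sqrt_mul (by norm_num) _
  rw [hs] at h
  calc ((Nat.factorial (m+1)) : ℝ)
      = (Nat.factorial (m+1) : ℝ) * Real.sqrt 2 / Real.sqrt 2 := by field_simp
    _ ≤ Real.exp 1 * (Real.sqrt 2 * Real.sqrt ((m+1:ℕ):ℝ) * (((m+1:ℕ):ℝ) / Real.exp 1) ^ (m+1)) / Real.sqrt 2 := by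
        apply div_le_div_of_nonneg_right h (by positivity) |>.trans_eq rfl
    _ = Real.exp 1 * Real.sqrt ((m+1:ℕ):ℝ) * (((m+1:ℕ):ℝ) / Real.exp 1) ^ (m+1) := by
        field_simp

lemma term_bound {t k : ℕ} (hk : 1 ≤ k) (hkt : k < t) :
    (t.choose k : ℝ) * ((k:ℝ)/t)^k * (((t:ℝ)-(k:ℝ))/t)^(t-k) ≤
      Real.exp 1 * Real.sqrt t / (2*π*Real.sqrt ((k:ℝ)*((t:ℝ)-(k:ℝ)))) := by
  have hkt' : k ≤ t := hkt.le
  have hM : ((t-k:ℕ):ℝ) = (t:ℝ) - k := by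
    push_cast [Nat.cast_sub hkt']; ring
  have hKpos : (0:ℝ) < k := by exact_mod_cast hk
  have hTpos : (0:ℝ) < t := by exact_mod_cast Nat.pos_of_ne_zero (by omega)
  have hMpos : (0:ℝ) < (t:ℝ) - k := by
    have : (k:ℝ) < t := by exact_mod_cast hkt
    linarith
  have hchoose : (t.choose k : ℝ) = (Nat.factorial t : ℝ) /
      ((Nat.factorial k : ℝ) * (Nat.factorial (t-k) : ℝ)) := Nat.cast_choose ℝ hkt'
  have h1 := factorial_upper t (by omega)
  have h2 := factorial_lower k hk
  have h3 := factorial_lower (t-k) (by omega)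
  rw [hM] at h3
  have hdpos : (0:ℝ) < Real.sqrt (2*π*k) * ((k:ℝ)/Real.exp 1)^k *
      (Real.sqrt (2*π*((t:ℝ)-k)) * (((t:ℝ)-k)/Real.exp 1)^(t-k)) := by positivity
  have hcb : (t.choose k : ℝ) ≤ (Real.exp 1 * Real.sqrt t * ((t:ℝ)/Real.exp 1)^t) /
      (Real.sqrt (2*π*k) * ((k:ℝ)/Real.exp 1)^k *
       (Real.sqrt (2*π*((t:ℝ)-k)) * (((t:ℝ)-k)/Real.exp 1)^(t-k))) := by
    rw [hchoose]
    exact div_le_div₀ (by positivity) h1 hdpos (mul_le_mul h2 h3 (by positivity)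
      (le_trans (by positivity) h2))
  calc (t.choose k : ℝ) * ((k:ℝ)/t)^k * (((t:ℝ)-(k:ℝ))/t)^(t-k)
      ≤ ((Real.exp 1 * Real.sqrt t * ((t:ℝ)/Real.exp 1)^t) /
          (Real.sqrt (2*π*k) * ((k:ℝ)/Real.exp 1)^k *
           (Real.sqrt (2*π*((t:ℝ)-k)) * (((t:ℝ)-k)/Real.exp 1)^(t-k)))) *
          ((k:ℝ)/t)^k * (((t:ℝ)-(k:ℝ))/t)^(t-k) := by
        apply mul_le_mul_of_nonneg_right _ (by positivity)
        exact mul_le_mul_of_nonneg_right hcb (by positivity)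
    _ = Real.exp 1 * Real.sqrt t / (2*π*Real.sqrt ((k:ℝ)*((t:ℝ)-(k:ℝ)))) := by
        have hsq : Real.sqrt (2*π*(k:ℝ)) * Real.sqrt (2*π*((t:ℝ)-k)) =
            2*π*Real.sqrt ((k:ℝ)*((t:ℝ)-k)) := by
          rw [← Real.sqrt_mul (by positivity),
            show (2*π*(k:ℝ))*(2*π*((t:ℝ)-k)) = (2*π)^2*((k:ℝ)*((t:ℝ)-k)) by ring,
            Real.sqrt_mul (by positivity), Real.sqrt_sq (by positivity)]
        have hpow : ((t:ℝ)/Real.exp 1)^t = ((t:ℝ)/Real.exp 1)^k * ((t:ℝ)/Real.exp 1)^(t-k) := by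
          rw [← pow_add]; congr 1; omega
        have c1 : ((t:ℝ)/Real.exp 1)^k * ((k:ℝ)/(t:ℝ))^k = ((k:ℝ)/Real.exp 1)^k := by
          rw [← mul_pow]; congr 1; field_simp
        have c2 : ((t:ℝ)/Real.exp 1)^(t-k) * (((t:ℝ)-(k:ℝ))/(t:ℝ))^(t-k) =
            (((t:ℝ)-k)/Real.exp 1)^(t-k) := by
          rw [← mul_pow]; congr 1; field_simp
        rw [hpow]
        rw [div_mul_eq_mul_div, div_mul_eq_mul_div, div_eq_div_iff hdpos.ne' (by positivity : (0:ℝ) < 2*π*Real.sqrt ((k:ℝ)*((t:ℝ)-(k:ℝ)))).ne']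
        linear_combination
          (Real.exp 1 * Real.sqrt (t:ℝ) * (2*π*Real.sqrt ((k:ℝ)*((t:ℝ)-(k:ℝ)))) *
            ((t:ℝ)/Real.exp 1)^(t-k) * (((t:ℝ)-(k:ℝ))/(t:ℝ))^(t-k)) * c1 +
          (Real.exp 1 * Real.sqrt (t:ℝ) * (2*π*Real.sqrt ((k:ℝ)*((t:ℝ)-(k:ℝ)))) *
            ((k:ℝ)/Real.exp 1)^k) * c2 -
          (Real.exp 1 * Real.sqrt (t:ℝ) * ((k:ℝ)/Real.exp 1)^k *
            (((t:ℝ)-(k:ℝ))/Real.exp 1)^(t-k)) * hsq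
def ff (t j : ℝ) : ℝ := 1 / Real.sqrt (j * (t - j))

lemma ff_anti {t a b : ℝ} (ha : 0 < a) (hab : a ≤ b) (hb : 2*b ≤ t) : ff t b ≤ ff t a := by
  unfold ff
  have h1 : 0 < a * (t - a) := by nlinarith
  have h2 : a * (t - a) ≤ b * (t - b) := by nlinarith
  exact one_div_le_one_div_of_le (Real.sqrt_pos.mpr h1) (Real.sqrt_le_sqrt h2)

lemma step {t k : ℕ} (hk : 1 ≤ k) (h2k : 2*k ≤ t) :
    ff t k ≤ arcsin (2*(k:ℝ)/t - 1) - arcsin (2*((k:ℝ)-1)/t - 1) := by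
  have htpos : (0:ℝ) < t := by exact_mod_cast (by omega : 0 < t)
  have hk1 : (1:ℝ) ≤ (k:ℝ) := by exact_mod_cast hk
  have h2k' : 2*(k:ℝ) ≤ t := by exact_mod_cast h2k
  have hab : (k:ℝ) - 1 < (k:ℝ) := by linarith
  have hderiv : ∀ x ∈ Set.Ioo ((k:ℝ)-1) (k:ℝ),
      HasDerivAt (fun x : ℝ => arcsin (2*x/t - 1)) (ff t x) x := by
    intro x hx
    have hx0 : 0 < x := by have := hx.1; linarith
    have hxt : x < t := by have := hx.2; linarith
    have hgt : -1 < 2*x/t - 1 := by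
      have : 0 < 2*x/t := by positivity
      linarith
    have hlt : 2*x/t - 1 < 1 := by
      have : 2*x/t < 2 := by rw [div_lt_iff₀ htpos]; linarith
      linarith
    have hinner : HasDerivAt (fun x : ℝ => 2*x/t - 1) (2/t) x := by
      have : HasDerivAt (fun x : ℝ => 2*x) 2 x := by
        simpa using (hasDerivAt_id x).const_mul (2:ℝ)
      simpa using (this.div_const (t:ℝ)).sub_const 1
    have hcomp := (Real.hasDerivAt_arcsin hgt.ne' hlt.ne).comp x hinner
    have key : 1 - (2*x/t - 1)^2 = (2/t)^2 * (x * ((t:ℝ) - x)) := by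
      field_simp; ring
    have key2 : Real.sqrt (1 - (2*x/t - 1)^2) = (2/t) * Real.sqrt (x*((t:ℝ)-x)) := by
      rw [key, Real.sqrt_mul (by positivity : (0:ℝ) ≤ (2/(t:ℝ))^2),
        Real.sqrt_sq (by positivity)]
    refine hcomp.congr_deriv ?_
    unfold ff
    rw [key2]
    have hs : 0 < Real.sqrt (x * ((t:ℝ) - x)) := Real.sqrt_pos.mpr (by nlinarith)
    field_simp
  have hcont : ContinuousOn (fun x : ℝ => arcsin (2*x/t - 1)) (Set.Icc ((k:ℝ)-1) (k:ℝ)) :=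
    (Real.continuous_arcsin.comp (by continuity)).continuousOn
  obtain ⟨c, hc, hceq⟩ := exists_hasDerivAt_eq_slope (fun x : ℝ => arcsin (2*x/t - 1))
    (fun x => ff t x) hab hcont hderiv
  have hslope : ff t c = arcsin (2*(k:ℝ)/t - 1) - arcsin (2*((k:ℝ)-1)/t - 1) := by
    rw [hceq]; norm_num
  rw [← hslope]
  exact ff_anti (by have := hc.1; linarith) (le_of_lt hc.2) (by linarith)

lemma half (t m : ℕ) (hm : 2*m ≤ t) :
    ∑ j ∈ range m, ff t ((j:ℝ)+1) ≤ π/2 := by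
  rcases Nat.eq_zero_or_pos m with rfl | hm1
  · simp only [Finset.range_zero, Finset.sum_empty]
    positivity
  have htpos : (0:ℝ) < t := by exact_mod_cast (by omega : 0 < t)
  set g : ℕ → ℝ := fun j => arcsin (2*(j:ℝ)/t - 1) with hg
  have htel : ∑ j ∈ range m, (g (j+1) - g j) = g m - g 0 := Finset.sum_range_sub g m
  have hbound : ∑ j ∈ range m, ff t ((j:ℝ)+1) ≤ ∑ j ∈ range m, (g (j+1) - g j) := by
    apply Finset.sum_le_sum
    intro j hj
    have hj' : j < m := Finset.mem_range.mp hj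
    have hst := step (t := t) (k := j+1) (by omega) (by omega)
    have e1 : ((j+1:ℕ):ℝ) = (j:ℝ)+1 := by push_cast; ring
    rw [e1] at hst
    refine hst.trans (le_of_eq ?_)
    simp only [hg]
    push_cast
    ring_nf
  rw [htel] at hbound
  have hg0 : g 0 = -(π/2) := by
    simp only [hg, Nat.cast_zero, mul_zero, zero_div, zero_sub]
    exact Real.arcsin_neg_one
  have hgm : g m ≤ 0 := by
    rw [hg]
    apply Real.arcsin_nonpos.mpr
    rw [sub_nonpos, div_le_one htpos]
    exact_mod_cast hm
  calc ∑ j ∈ range m, ff t ((j:ℝ)+1) ≤ g m - g 0 := hbound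
    _ ≤ 0 - (-(π/2)) := by rw [hg0]; linarith
    _ = π/2 := by ring

lemma ff_sym (t k : ℕ) (hk : k ≤ t) : ff t ((t - k : ℕ) : ℝ) = ff t k := by
  have h : ((t - k : ℕ) : ℝ) = (t:ℝ) - k := by
    rw [Nat.cast_sub hk]
  rw [h]; unfold ff; ring_nf

lemma middle (t : ℕ) (ht : 2 ≤ t) :
    ∑ j ∈ range (t-1), ff t ((j:ℝ)+1) ≤ π := by
  have hm : t/2 ≤ t - 1 := by omega
  rw [Finset.range_eq_Ico, ← Finset.sum_Ico_consecutive _ (Nat.zero_le (t/2)) hm]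
  have h1 : ∑ j ∈ Finset.Ico 0 (t/2), ff t ((j:ℝ)+1) ≤ π/2 := by
    rw [← Finset.range_eq_Ico]; exact half t (t/2) (by omega)
  have h2 : ∑ j ∈ Finset.Ico (t/2) (t-1), ff t ((j:ℝ)+1) ≤ π/2 := by
    have hre : ∑ j ∈ Finset.Ico (t/2) (t-1), ff t ((j:ℝ)+1)
        = ∑ i ∈ range (t - 1 - t/2), ff t ((i:ℝ)+1) := by
      apply Finset.sum_nbij' (i := fun j => t - 2 - j) (j := fun i => t - 2 - i)
      · intro a ha
        simp only [Finset.mem_Ico] at ha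
        simp only [Finset.mem_range]
        omega
      · intro a ha
        simp only [Finset.mem_range] at ha
        simp only [Finset.mem_Ico]
        omega
      · intro a ha
        simp only [Finset.mem_Ico] at ha
        omega
      · intro a ha
        simp only [Finset.mem_range] at ha
        omega
      · intro a ha
        simp only [Finset.mem_Ico] at ha
        have hc1 : ((t - 2 - a : ℕ):ℝ) = (t:ℝ) - 2 - a := by
          have h' : t - 2 - a = t - (2 + a) := by omega
          rw [h', Nat.cast_sub (by omega)]; push_cast; ring
        have hsym := ff_sym t (a+1) (by omega)
        have hc2 : ((t - (a+1) : ℕ):ℝ) = (t:ℝ) - ((a:ℝ)+1) := by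
          rw [Nat.cast_sub (by omega)]; push_cast; ring
        rw [hc2] at hsym
        push_cast at hsym
        rw [hc1, ← hsym]
        congr 1
        ring
    rw [hre]
    exact half t _ (by omega)
  linarith

lemma aux_sqrt {r T : ℝ} (hr : 0 ≤ r) (h : r^2 ≤ 4*T) : r ≤ 2*Real.sqrt T := by
  have hT : 0 ≤ T := by nlinarith
  nlinarith [Real.sq_sqrt hT, Real.sqrt_nonneg T]

lemma maurer_real (t : ℕ) (ht : 1 ≤ t) :
    ∑ k ∈ range (t+1), (t.choose k : ℝ) * ((k:ℝ)/t)^k * (((t:ℝ)-(k:ℝ))/t)^(t-k)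
      ≤ 2 * Real.sqrt t := by
  rcases lt_or_ge t 10 with h10 | h10
  · interval_cases t <;> norm_num [Finset.sum_range_succ] <;>
      first
        | exact aux_sqrt (by norm_num [Nat.choose]) (by norm_num [Nat.choose])
        | norm_num [Nat.choose]
  · have ht2 : 2 ≤ t := by omega
    have htpos : (0:ℝ) < t := by exact_mod_cast (by omega : 0 < t)
    set f : ℕ → ℝ := fun k => (t.choose k : ℝ) * ((k:ℝ)/t)^k * (((t:ℝ)-(k:ℝ))/t)^(t-k) with hf
    have hsplit : ∑ k ∈ range (t+1), f k = f 0 + (∑ j ∈ range (t-1), f (j+1)) + f t := by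
      rw [Finset.sum_range_succ]
      have h' : t = (t-1)+1 := by omega
      rw [h', Finset.sum_range_succ', ← h']
      ring
    have hf0 : f 0 = 1 := by
      simp [hf, div_self htpos.ne']
    have hft : f t = 1 := by
      simp [hf, div_self htpos.ne']
    have hmid : ∑ j ∈ range (t-1), f (j+1) ≤ Real.exp 1 * Real.sqrt t / 2 := by
      calc ∑ j ∈ range (t-1), f (j+1)
          ≤ ∑ j ∈ range (t-1), (Real.exp 1 * Real.sqrt t / (2*π)) * ff t ((j:ℝ)+1) := by
            apply Finset.sum_le_sum
            intro j hj
            have hj' : j < t-1 := Finset.mem_range.mp hj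
            have hb := term_bound (t := t) (k := j+1) (by omega) (by omega)
            have heq : Real.exp 1 * Real.sqrt t /
                (2*π*Real.sqrt (((j+1:ℕ):ℝ)*((t:ℝ)-((j+1:ℕ):ℝ))))
                = (Real.exp 1 * Real.sqrt t / (2*π)) * ff t ((j:ℝ)+1) := by
              unfold ff
              rw [mul_one_div, div_div]
              push_cast
              ring_nf
            rw [heq] at hb
            have harg : (((j+1:ℕ)):ℝ) = (j:ℝ)+1 := by push_cast; ring
            simpa [hf, harg] using hb
        _ = (Real.exp 1 * Real.sqrt t / (2*π)) * ∑ j ∈ range (t-1), ff t ((j:ℝ)+1) := by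
            rw [← Finset.mul_sum]
        _ ≤ (Real.exp 1 * Real.sqrt t / (2*π)) * π := by
            apply mul_le_mul_of_nonneg_left (middle t ht2) (by positivity)
        _ = Real.exp 1 * Real.sqrt t / 2 := by
            field_simp
    have he : Real.exp 1 < 2.7182818286 := Real.exp_one_lt_d9
    have hsq : (3.16:ℝ) ≤ Real.sqrt t := by
      rw [show (3.16:ℝ) = Real.sqrt (3.16^2) from (Real.sqrt_sq (by norm_num)).symm]
      apply Real.sqrt_le_sqrt
      have h10' : (10:ℝ) ≤ t := by exact_mod_cast h10
      nlinarith
    have h1 : Real.exp 1 * Real.sqrt t ≤ 2.7182818286 * Real.sqrt t :=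
      mul_le_mul_of_nonneg_right he.le (Real.sqrt_nonneg _)
    rw [hsplit, hf0, hft]
    linarith [hmid, h1, hsq]
lemma klReal_nonneg {q p : ℝ} (hq0 : 0 ≤ q) (hq1 : q ≤ 1) (hp0 : 0 < p) (hp1 : p < 1) :
    0 ≤ klReal q p := by
  unfold klReal
  rcases hq0.eq_or_lt with h0 | h0
  · rw [← h0]
    norm_num
    exact Real.log_nonpos (by linarith) (by linarith)
  rcases hq1.eq_or_lt with h1 | h1
  · rw [h1]
    simp only [sub_self, zero_mul, add_zero, one_mul, zero_div, Real.log_zero, mul_zero]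
    rw [one_div, Real.log_inv]
    have := Real.log_nonpos (by linarith) hp1.le
    linarith
  · have l1 : Real.log (p/q) ≤ p/q - 1 := Real.log_le_sub_one_of_pos (by positivity)
    have l2 : Real.log ((1-p)/(1-q)) ≤ (1-p)/(1-q) - 1 :=
      Real.log_le_sub_one_of_pos (by apply div_pos <;> linarith)
    have r1 : Real.log (q/p) = - Real.log (p/q) := by
      rw [← Real.log_inv, inv_div]
    have r2 : Real.log ((1-q)/(1-p)) = - Real.log ((1-p)/(1-q)) := by
      rw [← Real.log_inv, inv_div]
    have m1 : q * Real.log (p/q) ≤ p - q := by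
      have := mul_le_mul_of_nonneg_left l1 h0.le
      have e1 : q * (p/q - 1) = p - q := by field_simp
      linarith
    have m2 : (1-q) * Real.log ((1-p)/(1-q)) ≤ q - p := by
      have := mul_le_mul_of_nonneg_left l2 (by linarith : (0:ℝ) ≤ 1 - q)
      have hq' : (1:ℝ) - q ≠ 0 := by linarith
      have e2 : (1-q) * ((1-p)/(1-q) - 1) = q - p := by
        field_simp
        ring
      linarith
    rw [r1, r2]
    nlinarith

lemma lint_eq (t : ℕ) (p : ℝ) (f : ℝ → ℝ≥0∞) :
    ∫⁻ y, f y ∂(binomR t p) =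
      ∑ k ∈ range (t+1),
        ENNReal.ofReal ((t.choose k) * p^k * (1-p)^(t-k)) * f (k:ℝ) := by
  unfold binomR
  rw [MeasureTheory.lintegral_finset_sum_measure]
  exact Finset.sum_congr rfl fun k _ => by
    rw [MeasureTheory.lintegral_smul_measure, MeasureTheory.lintegral_dirac, smul_eq_mul]

lemma key_real {t k : ℕ} (hk : k ≤ t) (ht : 0 < t) {p : ℝ} (hp0 : 0 < p) (hp1 : p < 1) :
    ((t.choose k : ℝ) * p^k * (1-p)^(t-k)) * Real.exp ((t:ℝ) * klReal ((k:ℝ)/t) p)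
      = (t.choose k : ℝ) * ((k:ℝ)/t)^k * (((t:ℝ)-(k:ℝ))/t)^(t-k) := by
  have hT : (0:ℝ) < t := by exact_mod_cast ht
  have hsub : ((t - k : ℕ) : ℝ) = (t:ℝ) - k := by rw [Nat.cast_sub hk]
  have e0 : (t:ℝ) * klReal ((k:ℝ)/t) p =
      (k:ℝ) * Real.log (((k:ℝ)/t)/p) +
      ((t-k:ℕ):ℝ) * Real.log ((((t:ℝ)-(k:ℝ))/t)/(1-p)) := by
    unfold klReal
    rw [hsub]
    have h1 : 1 - (k:ℝ)/t = ((t:ℝ)-(k:ℝ))/t := by field_simp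
    rw [h1]
    field_simp
  rw [e0, Real.exp_add]
  have exp1 : Real.exp ((k:ℝ) * Real.log (((k:ℝ)/t)/p)) = (((k:ℝ)/t)/p)^k := by
    rcases Nat.eq_zero_or_pos k with rfl | hk0
    · simp
    · have : (0:ℝ) < ((k:ℝ)/t)/p := by
        have : (0:ℝ) < k := by exact_mod_cast hk0
        positivity
      rw [← Real.log_pow, Real.exp_log (pow_pos this k)]
  have exp2 : Real.exp (((t-k:ℕ):ℝ) * Real.log ((((t:ℝ)-(k:ℝ))/t)/(1-p)))
      = ((((t:ℝ)-(k:ℝ))/t)/(1-p))^(t-k) := by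
    rcases Nat.eq_zero_or_pos (t-k) with h0 | hk0
    · rw [h0]; simp
    · have hlt : (k:ℝ) < t := by exact_mod_cast (by omega : k < t)
      have : (0:ℝ) < (((t:ℝ)-(k:ℝ))/t)/(1-p) := by
        apply div_pos (div_pos (by linarith) hT) (by linarith)
      rw [← Real.log_pow, Real.exp_log (pow_pos this _)]
  rw [exp1, exp2, div_pow, div_pow, div_pow, div_pow]
  have hpk : p^k ≠ 0 := by positivity
  have hpk2 : (1-p)^(t-k) ≠ 0 := by
    apply pow_ne_zero; intro h; rw [sub_eq_zero] at h; exact hp1.ne h.symm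
  field_simp

lemma integral_eq (t : ℕ) (ht : 0 < t) {p : ℝ} (hp0 : 0 < p) (hp1 : p < 1) :
    (∫⁻ y, expENN ((t : ℝ≥0∞) * klBin (y / t) p) ∂(binomR t p)) =
      ENNReal.ofReal (∑ k ∈ range (t+1),
        (t.choose k : ℝ) * ((k:ℝ)/t)^k * (((t:ℝ)-(k:ℝ))/t)^(t-k)) := by
  have hT : (0:ℝ) < t := by exact_mod_cast ht
  rw [lint_eq]
  rw [ENNReal.ofReal_sum_of_nonneg]
  · apply Finset.sum_congr rfl
    intro k hk
    have hk' : k ≤ t := by have := Finset.mem_range.mp hk; omega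
    have hq0 : 0 ≤ (k:ℝ)/t := by positivity
    have hq1 : (k:ℝ)/t ≤ 1 := by
      rw [div_le_one hT]; exact_mod_cast hk'
    have hkl : klBin ((k:ℝ)/t) p = ENNReal.ofReal (klReal ((k:ℝ)/t) p) := by
      unfold klBin klReal
      rw [if_neg]
      rintro (⟨h, -⟩ | ⟨h, -⟩)
      · exact hp0.ne' h
      · exact hp1.ne h
    have hnn : 0 ≤ (t:ℝ) * klReal ((k:ℝ)/t) p :=
      mul_nonneg hT.le (klReal_nonneg hq0 hq1 hp0 hp1)
    have hmul : (t : ℝ≥0∞) * klBin ((k:ℝ)/t) p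
        = ENNReal.ofReal ((t:ℝ) * klReal ((k:ℝ)/t) p) := by
      rw [hkl, ← ENNReal.ofReal_natCast t, ← ENNReal.ofReal_mul (Nat.cast_nonneg t)]
    have hexp : expENN ((t : ℝ≥0∞) * klBin ((k:ℝ)/t) p)
        = ENNReal.ofReal (Real.exp ((t:ℝ) * klReal ((k:ℝ)/t) p)) := by
      rw [hmul]
      unfold expENN
      rw [if_neg ENNReal.ofReal_ne_top, ENNReal.toReal_ofReal hnn]
    have h1p : (0:ℝ) ≤ 1 - p := by linarith
    have hw : (0:ℝ) ≤ (t.choose k : ℝ) * p^k * (1-p)^(t-k) := by positivity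
    rw [hexp, ← ENNReal.ofReal_mul hw]
    rw [key_real hk' ht hp0 hp1]
  · intro k hk
    have hk' : k ≤ t := by have := Finset.mem_range.mp hk; omega
    have hkk : (0:ℝ) ≤ (t:ℝ) - k := by
      have : (k:ℝ) ≤ t := by exact_mod_cast hk'
      linarith
    have := Nat.choose_pos hk'
    positivity

end MaurerAux

theorem stmt18 {t : ℕ} (ht : 0 < t) (μ : ℝ) (hμ0 : 0 ≤ μ) (hμt : μ ≤ t) :
    (∫⁻ y, expENN ((t : ℝ≥0∞) * klBin (y / t) (μ / t)) ∂(binomR t (μ / t))) ≤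
      ENNReal.ofReal (2 * Real.sqrt t) := by
  have hT : (0:ℝ) < t := by exact_mod_cast ht
  have hone : (1:ℝ≥0∞) ≤ ENNReal.ofReal (2 * Real.sqrt t) := by
    rw [← ENNReal.ofReal_one]
    apply ENNReal.ofReal_le_ofReal
    have : (1:ℝ) ≤ Real.sqrt t := by
      rw [show (1:ℝ) = Real.sqrt 1 from Real.sqrt_one.symm]
      apply Real.sqrt_le_sqrt
      exact_mod_cast ht
    linarith
  set p : ℝ := μ / t with hp
  have hp0 : 0 ≤ p := by positivity
  have hp1 : p ≤ 1 := by rw [hp, div_le_one hT]; exact hμt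
  rcases hp0.eq_or_lt with h0 | h0
  · -- p = 0
    rw [MaurerAux.lint_eq]
    have : ∑ k ∈ Finset.range (t+1),
        ENNReal.ofReal ((t.choose k) * p^k * (1-p)^(t-k)) *
          expENN ((t : ℝ≥0∞) * klBin ((k:ℝ) / t) p) = 1 := by
      rw [Finset.sum_eq_single 0]
      · rw [← h0]
        have hkl : klBin (((0:ℕ):ℝ) / (t:ℝ)) 0 = 0 := by
          unfold klBin
          rw [if_neg (by norm_num)]
          norm_num
        rw [hkl, mul_zero]
        unfold expENN
        norm_num
      · intro k hk hk0
        rw [← h0]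
        rw [zero_pow hk0]
        norm_num
      · intro h
        exact absurd (Finset.mem_range.mpr (by omega)) h
    rw [this]
    exact hone
  rcases hp1.eq_or_lt with h1 | h1
  · -- p = 1
    rw [MaurerAux.lint_eq]
    have : ∑ k ∈ Finset.range (t+1),
        ENNReal.ofReal ((t.choose k) * p^k * (1-p)^(t-k)) *
          expENN ((t : ℝ≥0∞) * klBin ((k:ℝ) / t) p) = 1 := by
      rw [Finset.sum_eq_single t]
      · rw [h1]
        have hq : ((t:ℕ):ℝ)/(t:ℝ) = 1 := div_self hT.ne'
        rw [hq]
        have hkl : klBin 1 1 = 0 := by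
          unfold klBin
          rw [if_neg (by norm_num)]
          norm_num
        rw [hkl, mul_zero]
        unfold expENN
        norm_num
      · intro k hk hkt
        have hk' : k < t := by have := Finset.mem_range.mp hk; omega
        rw [h1]
        rw [sub_self, zero_pow (by omega : t - k ≠ 0)]
        norm_num
      · intro h
        exact absurd (Finset.mem_range.mpr (by omega)) h
    rw [this]
    exact hone
  · rw [MaurerAux.integral_eq t ht h0 h1]
    exact ENNReal.ofReal_le_ofReal (MaurerAux.maurer_real t ht)


end
end
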